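/- arXiv:1310.3650 — 4 statements merged into one kernel-verified Lean document; each statement's English description precedes it below -/
import Mathlib

section
/- Let Y be an integrable real random variable with E[Y] < 0 and P(Y = 0) < 1. Let f, g ∈ ℂ[X] be coprime polynomials with deg f < deg g, and suppose there exists ε > 0 such that for every s ∈ ℂ with −ε ≤ Re s ≤ 0 the random variable e^{−sY} is integrable and g(s)·E[e^{−sY}] = f(s). Then the number of roots of g with Re s ≥ 0 (counted with multiplicity) equals the number of roots of g − f with Re s ≥ 0 (counted with multiplicity). -/
open MeasureTheory ProbabilityTheory Polynomial

open Filter Topology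


lemma aux_exp_moment {Ω : Type*} [MeasurableSpace Ω] (μ : Measure Ω) [IsProbabilityMeasure μ]
    (Y : Ω → ℝ) (hYm : Measurable Y) (hYint : Integrable Y μ) (hYmean : ∫ ω, Y ω ∂μ < 0)
    {ε : ℝ} (hε : 0 < ε)
    (hint : ∀ δ : ℝ, 0 < δ → δ ≤ ε → Integrable (fun ω => Real.exp (δ * Y ω)) μ) :
    ∀ᶠ δ in 𝓝[>] (0:ℝ), ∫ ω, Real.exp (δ * Y ω) ∂μ < 1 := by
  set F : ℝ → Ω → ℝ := fun δ ω => (Real.exp (δ * Y ω) - 1) / δ with hF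
  have hG : Integrable (fun ω => |Y ω| + (2/ε) * Real.exp (ε * Y ω)) μ :=
    hYint.abs.add ((hint ε hε le_rfl).const_mul _)
  have hbound : ∀ᶠ δ in 𝓝[>] (0:ℝ), ∀ᵐ ω ∂μ, ‖F δ ω‖ ≤ |Y ω| + (2/ε) * Real.exp (ε * Y ω) := by
    filter_upwards [Ioo_mem_nhdsGT_of_mem (Set.left_mem_Ico.2 (half_pos hε))] with δ hδ
    refine Filter.Eventually.of_forall fun ω => ?_
    obtain ⟨hδ0, hδε⟩ := hδ
    set y := Y ω
    rcases le_or_gt 0 y with hy | hy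
    · have h1 : Real.exp (δ * y) - 1 ≤ δ * y * Real.exp (δ * y) := by
        have key := mul_le_mul_of_nonneg_right (Real.add_one_le_exp (-(δ * y)))
          (Real.exp_pos (δ * y)).le
        have hmul : Real.exp (-(δ * y)) * Real.exp (δ * y) = 1 := by
          rw [← Real.exp_add]; simp
        nlinarith [key, hmul]
      have h2 : Real.exp (δ * y) ≤ Real.exp ((ε/2) * y) := by
        apply Real.exp_le_exp.2
        nlinarith
      have h3 : y ≤ (2/ε) * Real.exp ((ε/2) * y) := by
        have h' : (ε/2) * y ≤ Real.exp ((ε/2)*y) := by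
          have := Real.add_one_le_exp ((ε/2) * y); linarith
        calc y = (2/ε) * ((ε/2) * y) := by field_simp
          _ ≤ (2/ε) * Real.exp ((ε/2)*y) :=
              mul_le_mul_of_nonneg_left h' (by positivity)
      have h4 : Real.exp ((ε/2)*y) * Real.exp ((ε/2)*y) = Real.exp (ε * y) := by
        rw [← Real.exp_add]; ring_nf
      have hnn : 0 ≤ Real.exp (δ * y) - 1 := by
        have : (1:ℝ) ≤ Real.exp (δ * y) := Real.one_le_exp (by positivity)
        linarith
      have : ‖F δ ω‖ = (Real.exp (δ * y) - 1) / δ := by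
        rw [hF]; simp only [Real.norm_eq_abs]
        exact abs_of_nonneg (div_nonneg hnn hδ0.le)
      rw [this]
      rw [div_le_iff₀ hδ0]
      have hexp2 : (0:ℝ) < Real.exp ((ε/2) * y) := Real.exp_pos _
      calc Real.exp (δ * y) - 1 ≤ δ * y * Real.exp ((ε/2) * y) := by nlinarith
        _ ≤ δ * ((2/ε) * Real.exp ((ε/2)*y)) * Real.exp ((ε/2)*y) := by
            nlinarith [mul_le_mul_of_nonneg_left h3 (mul_pos hδ0 hexp2).le]
        _ = δ * ((2/ε) * Real.exp (ε * y)) := by rw [← h4]; ring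
        _ ≤ (|y| + 2/ε * Real.exp (ε * y)) * δ := by
            have : 0 ≤ |y| := abs_nonneg _
            nlinarith [Real.exp_pos (ε*y)]
    · have h1 : 1 - Real.exp (δ * y) ≤ -(δ * y) := by
        have := Real.add_one_le_exp (δ * y); linarith
      have h2 : Real.exp (δ * y) ≤ 1 := Real.exp_le_one_iff.2 (by nlinarith)
      have : ‖F δ ω‖ = (1 - Real.exp (δ * y)) / δ := by
        rw [hF]; simp only [Real.norm_eq_abs, abs_div]
        rw [abs_of_pos hδ0, abs_sub_comm, abs_of_nonneg (by linarith)]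
      rw [this]
      have : (1 - Real.exp (δ * y)) / δ ≤ -y := by
        rw [div_le_iff₀ hδ0]; nlinarith
      have hy' : -y ≤ |y| := neg_le_abs y
      nlinarith [Real.exp_pos (ε * y), div_pos (by norm_num : (0:ℝ) < 2) hε]
  have hmeas : ∀ᶠ δ in 𝓝[>] (0:ℝ), AEStronglyMeasurable (F δ) μ := by
    refine Filter.Eventually.of_forall fun δ => ?_
    exact (((hYm.const_mul δ).exp.sub measurable_const).div_const δ).aestronglyMeasurable
  have hlim : ∀ᵐ ω ∂μ, Tendsto (fun δ => F δ ω) (𝓝[>] (0:ℝ)) (𝓝 (Y ω)) := by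
    refine Filter.Eventually.of_forall fun ω => ?_
    set y := Y ω
    have hd : HasDerivAt (fun δ : ℝ => Real.exp (δ * y)) y 0 := by
      have h1 : HasDerivAt (fun δ : ℝ => δ * y) y 0 := hasDerivAt_mul_const y
      simpa using h1.exp
    have := hasDerivAt_iff_tendsto_slope.mp hd
    have h2 : Tendsto (slope (fun δ : ℝ => Real.exp (δ * y)) 0) (𝓝[>] (0:ℝ)) (𝓝 y) :=
      this.mono_left (nhdsWithin_mono _ (fun x hx => by simpa using ne_of_gt hx))
    refine h2.congr' ?_
    filter_upwards [self_mem_nhdsWithin] with δ hδ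
    rw [slope_def_field]
    simp [hF]
    rfl
  have hmain : Tendsto (fun δ => ∫ ω, F δ ω ∂μ) (𝓝[>] (0:ℝ)) (𝓝 (∫ ω, Y ω ∂μ)) :=
    tendsto_integral_filter_of_dominated_convergence _ hmeas hbound hG hlim
  have hneg : ∀ᶠ δ in 𝓝[>] (0:ℝ), ∫ ω, F δ ω ∂μ < 0 :=
    hmain.eventually_lt_const hYmean |>.mono (fun δ h => h) |>.mp (Filter.Eventually.of_forall fun _ h => h)
  filter_upwards [hneg, self_mem_nhdsWithin,
    Ioo_mem_nhdsGT_of_mem (Set.left_mem_Ico.2 hε)] with δ h1 h2 h3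
  have hδ0 : (0:ℝ) < δ := h2
  have hI : Integrable (fun ω => Real.exp (δ * Y ω)) μ := hint δ hδ0 h3.2.le
  have heq : ∫ ω, F δ ω ∂μ = (∫ ω, Real.exp (δ * Y ω) ∂μ - 1) / δ := by
    rw [hF]
    simp only [div_eq_mul_inv]
    rw [integral_mul_const, integral_sub hI (integrable_const 1), integral_const]
    simp [measure_univ]
  rw [heq] at h1
  have := (div_neg_iff.mp h1)
  rcases this with ⟨h, _⟩ | ⟨h, hd⟩
  · linarith
  · linarith


lemma multiset_ofFn_map_prod {M : Type*} [CommMonoid M] {n : ℕ} (v : Fin n → M) :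
    ((List.ofFn v : Multiset M)).prod = ∏ i, v i := by
  simp [List.prod_ofFn]

lemma map_coe_ofFn {α β : Type*} {n : ℕ} (f : α → β) (v : Fin n → α) :
    Multiset.map f (List.ofFn v : Multiset α) = (List.ofFn (f ∘ v) : Multiset β) := by
  rw [Multiset.map_coe, List.map_ofFn]

lemma exists_root_fn {n : ℕ} (p : ℂ[X]) (h : p.roots.card = n) :
    ∃ v : Fin n → ℂ, p.roots = (List.ofFn v : Multiset ℂ) := by
  obtain ⟨l, hl⟩ := Quotient.exists_rep p.roots
  have hl' : (l : Multiset ℂ) = p.roots := hl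
  have hlen : l.length = n := by
    have : (l : Multiset ℂ).card = n := by rw [hl']; exact h
    simpa using this
  refine ⟨fun i => l.get (Fin.cast hlen.symm i), ?_⟩
  rw [← hl']
  congr 1
  apply List.ext_getElem
  · simp [hlen]
  · intro i h1 h2
    simp [List.getElem_ofFn]

lemma poly_normal_form {n : ℕ} (p : ℂ[X]) (v : Fin n → ℂ)
    (hcard : p.roots.card = p.natDegree) (hv : p.roots = (List.ofFn v : Multiset ℂ)) :
    p = C p.leadingCoeff * ∏ i, (X - C (v i)) := by
  conv_lhs => rw [← C_leadingCoeff_mul_prod_multiset_X_sub_C hcard]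
  congr 1
  rw [hv, map_coe_ofFn]
  exact multiset_ofFn_map_prod _

lemma roots_normal_form {n : ℕ} (c : ℂ) (hc : c ≠ 0) (w : Fin n → ℂ) :
    (C c * ∏ i, (X - C (w i))).roots = (List.ofFn w : Multiset ℂ) := by
  rw [roots_C_mul _ hc]
  have : (∏ i, (X - C (w i))) =
      (Multiset.map (fun a => X - C a) (List.ofFn w : Multiset ℂ)).prod := by
    rw [map_coe_ofFn]
    exact (multiset_ofFn_map_prod _).symm
  rw [this, roots_multiset_prod_X_sub_C]

lemma count_ofFn {n : ℕ} (v : Fin n → ℂ) (q : ℂ → Prop) [DecidablePred q] :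
    (Multiset.filter q (List.ofFn v : Multiset ℂ)).card =
      (Finset.univ.filter (fun i => q (v i))).card := by
  have h1 : (List.ofFn v : Multiset ℂ) = Multiset.map v Finset.univ.val := by
    have h2 : (Finset.univ.val : Multiset (Fin n)) = ((List.finRange n : List (Fin n)) : Multiset (Fin n)) := rfl
    rw [h2, Multiset.map_coe, ← List.ofFn_eq_map]
  rw [h1, Multiset.filter_map, Multiset.card_map]
  rfl

open Filter in
lemma root_count_line (f g : ℂ[X]) (hdeg : f.degree < g.degree) (δ : ℝ)
    (hline : ∀ t : ℝ, t ∈ Set.Icc (0:ℝ) 1 → ∀ s : ℂ, s.re = -δ →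
      (g - C (t:ℂ) * f).eval s ≠ 0) :
    (g.roots.filter (fun r => -δ < r.re)).card =
      ((g - f).roots.filter (fun r => -δ < r.re)).card := by
  classical
  have hg0 : g ≠ 0 := by
    rintro rfl
    simp only [degree_zero] at hdeg
    exact not_lt_bot hdeg
  set n := g.natDegree with hn
  set p : ℝ → ℂ[X] := fun t => g - C (t:ℂ) * f with hp
  have hdegp : ∀ t : ℝ, (p t).degree = g.degree := by
    intro t
    apply degree_sub_eq_left_of_degree_lt
    refine lt_of_le_of_lt ?_ hdeg
    refine (degree_mul_le _ _).trans ?_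
    simpa using add_le_add_left (degree_C_le (a := (t:ℂ))) f.degree
  have hp0 : ∀ t, p t ≠ 0 := by
    intro t h
    apply hg0
    rw [← degree_eq_bot, ← hdegp t, h, degree_zero]
  have hnatp : ∀ t, (p t).natDegree = n := fun t => natDegree_eq_of_degree_eq (hdegp t)
  have hfn : f.coeff n = 0 :=
    coeff_eq_zero_of_degree_lt (by rw [← degree_eq_natDegree hg0]; exact hdeg)
  have hlcp : ∀ t : ℝ, (p t).leadingCoeff = g.leadingCoeff := by
    intro t
    have hco : (p t).coeff n = g.coeff n := by
      simp only [hp, coeff_sub, coeff_C_mul, hfn, mul_zero, sub_zero]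
    rw [leadingCoeff, hnatp t, hco]; rfl
  have hcardp : ∀ t, (p t).roots.card = n := fun t => by
    rw [← hnatp t]
    exact splits_iff_card_roots.mp (IsAlgClosed.splits _)
  set c := g.leadingCoeff with hc
  have hc0 : c ≠ 0 := leadingCoeff_ne_zero.mpr hg0
  set Bnn : NNReal := ((Finset.range n).sup fun i => ‖g.coeff i‖₊ + ‖f.coeff i‖₊) / ‖c‖₊ + 1
    with hBnn
  set B : ℝ := (Bnn : ℝ) with hBdef
  have hB0 : (0:ℝ) ≤ B := Bnn.coe_nonneg
  have hBroot : ∀ t : ℝ, t ∈ Set.Icc (0:ℝ) 1 → ∀ r ∈ (p t).roots, ‖r‖ ≤ B := by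
    intro t ht r hr
    have hroot : (p t).IsRoot r := (mem_roots (hp0 t)).mp hr
    have h1 : ‖r‖₊ < cauchyBound (p t) := hroot.norm_lt_cauchyBound (hp0 t)
    have h2 : cauchyBound (p t) ≤ Bnn := by
      rw [Polynomial.cauchyBound, hBnn]
      have hnum : (Finset.range (p t).natDegree).sup (fun i => ‖(p t).coeff i‖₊) ≤
          (Finset.range n).sup fun i => ‖g.coeff i‖₊ + ‖f.coeff i‖₊ := by
        rw [hnatp t]
        apply Finset.sup_mono_fun
        intro i _
        calc ‖(p t).coeff i‖₊ = ‖g.coeff i - (t:ℂ) * f.coeff i‖₊ := by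
              rw [hp]; simp [coeff_sub, coeff_C_mul]
          _ ≤ ‖g.coeff i‖₊ + ‖(t:ℂ) * f.coeff i‖₊ := nnnorm_sub_le _ _
          _ = ‖g.coeff i‖₊ + ‖(t:ℂ)‖₊ * ‖f.coeff i‖₊ := by rw [nnnorm_mul]
          _ ≤ ‖g.coeff i‖₊ + 1 * ‖f.coeff i‖₊ := by
              gcongr
              have : ‖(t:ℂ)‖₊ = ‖t‖₊ := by simp
              rw [this, ← NNReal.coe_le_coe]
              simp [Real.norm_eq_abs, abs_le]
              constructor <;> linarith [ht.1, ht.2]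
          _ = ‖g.coeff i‖₊ + ‖f.coeff i‖₊ := by rw [one_mul]
      rw [hlcp t]
      gcongr
    rw [← coe_nnnorm, hBdef, NNReal.coe_le_coe]
    exact (h1.trans_le h2).le
  set cnt : ℝ → ℕ := fun t => ((p t).roots.filter (fun r => -δ < r.re)).card with hcnt
  have claim : ∀ u₀ ∈ Set.Icc (0:ℝ) 1, ∃ η > (0:ℝ), ∀ u ∈ Set.Icc (0:ℝ) 1,
      |u - u₀| < η → cnt u = cnt u₀ := by
    intro u₀ hu₀
    by_contra hcon
    push_neg at hcon
    have hsel : ∀ k : ℕ, ∃ x, (x ∈ Set.Icc (0:ℝ) 1 ∧ |x - u₀| < 1/(k+1)) ∧ cnt x ≠ cnt u₀ := by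
      intro k
      obtain ⟨x, hx1, hx2, hx3⟩ := hcon (1/(k+1)) (by positivity)
      exact ⟨x, ⟨hx1, hx2⟩, hx3⟩
    choose u hu hune using hsel
    have humem : ∀ k, u k ∈ Set.Icc (0:ℝ) 1 := fun k => (hu k).1
    have hucl : ∀ k, |u k - u₀| < 1/(k+1) := fun k => (hu k).2
    choose v hv using fun k => exists_root_fn (p (u k)) (hcardp (u k))
    have hvmem : ∀ k, v k ∈ Metric.closedBall (0 : Fin n → ℂ) B := by
      intro k
      rw [Metric.mem_closedBall, dist_zero_right, pi_norm_le_iff_of_nonneg hB0]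
      intro i
      apply hBroot (u k) (humem k)
      rw [hv k]
      exact Multiset.mem_coe.mpr (List.mem_ofFn.mpr ⟨i, rfl⟩)
    obtain ⟨w, hwmem, φ, hφmono, hwten⟩ :=
      (isCompact_closedBall (0 : Fin n → ℂ) B).tendsto_subseq hvmem
    have hu_tend : Tendsto u atTop (𝓝 u₀) := by
      rw [tendsto_iff_dist_tendsto_zero]
      apply squeeze_zero (fun k => dist_nonneg) (fun k => ?_) tendsto_one_div_add_atTop_nhds_zero_nat
      rw [Real.dist_eq]
      exact (hucl k).le
    have huφ : Tendsto (fun k => u (φ k)) atTop (𝓝 u₀) := hu_tend.comp hφmono.tendsto_atTop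
    have hcoord : ∀ i, Tendsto (fun k => v (φ k) i) atTop (𝓝 (w i)) :=
      fun i => ((continuous_apply i).continuousAt.tendsto).comp hwten
    have heval : ∀ z : ℂ, (p u₀).eval z = c * ∏ i, (z - w i) := by
      intro z
      have h1 : ∀ k, (p (u (φ k))).eval z = c * ∏ i, (z - v (φ k) i) := by
        intro k
        conv_lhs => rw [poly_normal_form (p (u (φ k))) (v (φ k))
          (by rw [hnatp]; exact hcardp _) (hv _)]
        rw [eval_mul, eval_C, hlcp, eval_prod]
        simp
      have h2 : Tendsto (fun k => (p (u (φ k))).eval z) atTop (𝓝 ((p u₀).eval z)) := by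
        have hev : ∀ t : ℝ, (p t).eval z = g.eval z - (t:ℂ) * f.eval z := by
          intro t; rw [hp]; simp
        simp only [hev]
        exact tendsto_const_nhds.sub
          (((Complex.continuous_ofReal.tendsto u₀).comp huφ).mul tendsto_const_nhds)
      have h3 : Tendsto (fun k => c * ∏ i, (z - v (φ k) i)) atTop (𝓝 (c * ∏ i, (z - w i))) := by
        apply tendsto_const_nhds.mul
        apply tendsto_finset_prod
        intro i _
        exact tendsto_const_nhds.sub (hcoord i)
      exact tendsto_nhds_unique (h2.congr h1) h3
    have hpu₀ : p u₀ = C c * ∏ i, (X - C (w i)) := by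
      apply Polynomial.funext
      intro z
      rw [heval z, eval_mul, eval_C, eval_prod]
      simp
    have hroots₀ : (p u₀).roots = (List.ofFn w : Multiset ℂ) := by
      rw [hpu₀]; exact roots_normal_form c hc0 w
    have hwre : ∀ i, (w i).re ≠ -δ := by
      intro i hre
      apply hline u₀ hu₀ (w i) hre
      have hmem : w i ∈ (p u₀).roots := by
        rw [hroots₀]; exact Multiset.mem_coe.mpr (List.mem_ofFn.mpr ⟨i, rfl⟩)
      exact (mem_roots (hp0 u₀)).mp hmem
    have hevsign : ∀ᶠ k in atTop, ∀ i, ((-δ) < (v (φ k) i).re ↔ (-δ) < (w i).re) := by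
      rw [eventually_all]
      intro i
      have hreten : Tendsto (fun k => (v (φ k) i).re) atTop (𝓝 ((w i).re)) :=
        (Complex.continuous_re.tendsto _).comp (hcoord i)
      rcases lt_or_gt_of_ne (hwre i) with h | h
      · filter_upwards [hreten.eventually (eventually_lt_nhds h)] with k hk
        constructor
        · intro hh; linarith
        · intro hh; linarith
      · filter_upwards [hreten.eventually (eventually_gt_nhds h)] with k hk
        constructor
        · intro _; exact h
        · intro _; exact hk
    obtain ⟨k, hk⟩ := hevsign.exists
    apply hune (φ k)
    have e1 : cnt (u (φ k)) = (Finset.univ.filter (fun i => -δ < (v (φ k) i).re)).card := by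
      rw [hcnt]
      simp only []
      rw [hv (φ k)]
      exact count_ofFn _ _
    have e2 : cnt u₀ = (Finset.univ.filter (fun i => -δ < (w i).re)).card := by
      rw [hcnt]
      simp only []
      rw [hroots₀]
      exact count_ofFn _ _
    rw [e1, e2]
    congr 1
    exact Finset.filter_congr (fun i _ => hk i)
  -- locally constant along the clamped path
  set proj : ℝ → ℝ := fun t => max 0 (min 1 t) with hprojdef
  have hprojmem : ∀ t, proj t ∈ Set.Icc (0:ℝ) 1 :=
    fun t => ⟨le_max_left _ _, max_le (by norm_num) (min_le_left _ _)⟩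
  have hprojlip : ∀ a b : ℝ, |proj a - proj b| ≤ |a - b| := by
    intro a b
    calc |proj a - proj b| = |max (min 1 a) 0 - max (min 1 b) 0| := by
          rw [hprojdef]; simp only [max_comm]
      _ ≤ |min 1 a - min 1 b| := abs_max_sub_max_le_abs _ _ _
      _ = |min a 1 - min b 1| := by rw [min_comm 1 a, min_comm 1 b]
      _ ≤ max |a - b| |1 - 1| := abs_min_sub_min_le_max _ _ _ _
      _ = |a - b| := by simp
  have hlc : IsLocallyConstant (fun t => cnt (proj t)) := by
    rw [IsLocallyConstant.iff_eventually_eq]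
    intro t₀
    obtain ⟨η, hη, hclaim⟩ := claim (proj t₀) (hprojmem t₀)
    have : Metric.ball t₀ η ∈ 𝓝 t₀ := Metric.ball_mem_nhds t₀ hη
    filter_upwards [this] with t ht
    apply hclaim (proj t) (hprojmem t)
    calc |proj t - proj t₀| ≤ |t - t₀| := hprojlip t t₀
      _ < η := by rw [← Real.dist_eq]; exact ht
  have hkey : cnt 0 = cnt 1 := by
    have h01 : cnt (proj 0) = cnt (proj 1) := hlc.apply_eq_of_preconnectedSpace 0 1
    have hp0' : proj 0 = 0 := by rw [hprojdef]; norm_num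
    have hp1' : proj 1 = 1 := by rw [hprojdef]; norm_num
    rwa [hp0', hp1'] at h01
  have hcnt0 : p 0 = g := by rw [hp]; simp
  have hcnt1 : p 1 = g - f := by rw [hp]; simp
  have e0 : cnt 0 = (g.roots.filter (fun r => -δ < r.re)).card := by
    simp only [hcnt]
    rw [hcnt0]
  have e1' : cnt 1 = ((g - f).roots.filter (fun r => -δ < r.re)).card := by
    simp only [hcnt]
    rw [hcnt1]
  rw [← e0, ← e1']
  exact hkey

/-- If the transform of the (stable) increment `Y` is the rational
function `f/g` on a strip `-ε ≤ Re s ≤ 0`, then `g` and `g - f` have the same number of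
roots (with multiplicity) in the closed right half-plane. -/
theorem root_count_right_half_plane
    {Ω : Type*} [MeasurableSpace Ω] (μ : Measure Ω) [IsProbabilityMeasure μ]
    (Y : Ω → ℝ) (hYm : Measurable Y) (hYint : Integrable Y μ)
    (hYmean : ∫ ω, Y ω ∂μ < 0) (hY0 : μ {ω | Y ω = 0} < 1)
    (f g : Polynomial ℂ) (hcop : IsCoprime f g) (hdeg : f.degree < g.degree)
    (htrans : ∃ ε > (0:ℝ), ∀ s : ℂ, -ε ≤ s.re → s.re ≤ 0 →
      Integrable (fun ω => Complex.exp (-s * (Y ω : ℂ))) μ ∧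
        g.eval s * ∫ ω, Complex.exp (-s * (Y ω : ℂ)) ∂μ = f.eval s) :
    (g.roots.filter (fun r => 0 ≤ r.re)).card =
      ((g - f).roots.filter (fun r => 0 ≤ r.re)).card := by
  classical
  obtain ⟨ε, hε, htr⟩ := htrans
  have hnormexp : ∀ (s : ℂ) (ω : Ω), ‖Complex.exp (-s * (Y ω : ℂ))‖ =
      Real.exp (-s.re * Y ω) := by
    intro s ω
    rw [Complex.norm_exp]
    congr 1
    simp [Complex.mul_re]
  have hintreal : ∀ δ : ℝ, 0 < δ → δ ≤ ε → Integrable (fun ω => Real.exp (δ * Y ω)) μ := by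
    intro δ hδ hδε
    have h := (htr (((-δ : ℝ)):ℂ) (by simp; linarith) (by simp; linarith)).1
    refine h.norm.congr (Filter.Eventually.of_forall fun ω => ?_)
    simp only [hnormexp]
    norm_num
  have hev1 := aux_exp_moment μ Y hYm hYint hYmean hε hintreal
  set badroots : Finset ℂ := (g.roots + (g - f).roots).toFinset with hbad
  have hev2 : ∀ᶠ δ in 𝓝[>](0:ℝ), ∀ r ∈ badroots, r.re < 0 → δ < -r.re := by
    rw [eventually_all_finset]
    intro r hr
    rcases lt_or_ge r.re 0 with h | h
    · have hmem : Set.Iio (-r.re) ∈ 𝓝[>](0:ℝ) :=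
        mem_nhdsWithin_of_mem_nhds (Iio_mem_nhds (by linarith))
      filter_upwards [hmem] with δ' hδ' _
      exact hδ'
    · exact Filter.Eventually.of_forall fun δ' h' => absurd h' (not_lt.mpr h)
  have hev3 : ∀ᶠ δ in 𝓝[>](0:ℝ), δ ∈ Set.Ioo 0 ε :=
    Ioo_mem_nhdsGT_of_mem (Set.left_mem_Ico.2 hε)
  obtain ⟨δ, hδ1, hδ2, hδpos, hδε⟩ := (hev1.and (hev2.and hev3)).exists
  have hline : ∀ t : ℝ, t ∈ Set.Icc (0:ℝ) 1 → ∀ s : ℂ, s.re = -δ →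
      (g - C (t:ℂ) * f).eval s ≠ 0 := by
    intro t ht s hsre heval0
    have hs1 : -ε ≤ s.re := by rw [hsre]; linarith
    have hs2 : s.re ≤ 0 := by rw [hsre]; linarith
    obtain ⟨hI, hEq⟩ := htr s hs1 hs2
    set I := ∫ ω, Complex.exp (-s * (Y ω : ℂ)) ∂μ with hIdef
    have hIle : ‖I‖ ≤ ∫ ω, Real.exp (δ * Y ω) ∂μ := by
      refine (norm_integral_le_integral_norm _).trans (le_of_eq ?_)
      apply integral_congr_ae
      refine Filter.Eventually.of_forall fun ω => ?_
      simp only [hnormexp, hsre, neg_neg]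
    have hIlt : ‖I‖ < 1 := lt_of_le_of_lt hIle hδ1
    have heq2 : g.eval s = (t:ℂ) * f.eval s := by
      rw [eval_sub, eval_mul, eval_C, sub_eq_zero] at heval0
      exact heval0
    by_cases hg : g.eval s = 0
    · have hf : f.eval s = 0 := by rw [← hEq, hg, zero_mul]
      obtain ⟨a, b, hab⟩ := hcop
      have hone := congrArg (Polynomial.eval s) hab
      rw [eval_add, eval_mul, eval_mul, hf, hg] at hone
      simp at hone
    · have h1 : ((t:ℂ) * I) * g.eval s = 1 * g.eval s := by
        rw [one_mul]
        calc ((t:ℂ) * I) * g.eval s = (t:ℂ) * (g.eval s * I) := by ring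
          _ = (t:ℂ) * f.eval s := by rw [hEq]
          _ = g.eval s := heq2.symm
      have h2 : (t:ℂ) * I = 1 := mul_right_cancel₀ hg h1
      have h3 : ‖(t:ℂ) * I‖ ≤ ‖I‖ := by
        rw [norm_mul]
        have ht1 : ‖(t:ℂ)‖ ≤ 1 := by
          rw [Complex.norm_real, Real.norm_eq_abs, abs_le]
          exact ⟨by linarith [ht.1], ht.2⟩
        nlinarith [norm_nonneg I, norm_nonneg ((t:ℂ))]
      rw [h2, norm_one] at h3
      linarith
  have hmain := root_count_line f g hdeg δ hline
  have h1 : ∀ r ∈ g.roots, ((0:ℝ) ≤ r.re ↔ -δ < r.re) := by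
    intro r hr
    constructor
    · intro h; linarith
    · intro h
      by_contra hneg
      push_neg at hneg
      have hb : r ∈ badroots := by
        rw [hbad, Multiset.mem_toFinset]
        exact Multiset.mem_add.mpr (Or.inl hr)
      have := hδ2 r hb hneg
      linarith
  have h2 : ∀ r ∈ (g - f).roots, ((0:ℝ) ≤ r.re ↔ -δ < r.re) := by
    intro r hr
    constructor
    · intro h; linarith
    · intro h
      by_contra hneg
      push_neg at hneg
      have hb : r ∈ badroots := by
        rw [hbad, Multiset.mem_toFinset]
        exact Multiset.mem_add.mpr (Or.inr hr)
      have := hδ2 r hb hneg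
      linarith
  rw [Multiset.filter_congr h1, Multiset.filter_congr h2]
  exact hmain
end

section
/- Let c > 0, let s ∈ ℂ with s ≠ 0, let N ≥ 1 be an integer, and let A_1,…,A_N and B_1,…,B_N be positive real numbers. Define W_1 = 0 and W_{i+1} = W_i + B_i/c − A_i for 1 ≤ i ≤ N − 1, and assume W_i + B_i/c − A_i ≥ 0 for all 1 ≤ i ≤ N − 1 and that I := A_N − (W_N + B_N/c) ≥ 0. Set t_1 = 0, t_{i+1} = t_i + A_i for 1 ≤ i ≤ N − 1, and P := t_N + W_N + B_N/c. Define V(t) := cW_i + B_i − c(t − t_i) for t ∈ [t_i, t_{i+1}) when i ≤ N − 1, and V(t) := cW_N + B_N − c(t − t_N) for t ∈ [t_N, P). Then ∫_0^P e^{−sV(t)} dt = (1/(cs)) · ∑_{i=1}^{N} e^{−s c W_i} (1 − e^{−s B_i}). -/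
open MeasureTheory

lemma piece_integral (c : ℝ) (hc : 0 < c) (s : ℂ) (hs : s ≠ 0)
    (a b w β : ℝ) (hab : a ≤ b) (V : ℝ → ℝ)
    (hV : ∀ x ∈ Set.Ico a b, V x = c * w + β - c * (x - a)) :
    ∫ x in Set.Ico a b, Complex.exp (-s * (V x : ℂ)) =
      (Complex.exp (-s * ((c * w + β : ℝ) : ℂ) + s * c * ((b - a : ℝ) : ℂ))
        - Complex.exp (-s * ((c * w + β : ℝ) : ℂ))) / (s * c) := by
  have hc' : (c : ℂ) ≠ 0 := by exact_mod_cast hc.ne'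
  have hsc : (s * (c : ℂ)) ≠ 0 := mul_ne_zero hs hc'
  have h1 : ∫ x in Set.Ico a b, Complex.exp (-s * (V x : ℂ))
      = ∫ x in Set.Ico a b,
          Complex.exp (-s * ((c * w + β : ℝ) : ℂ) - s * c * a) * Complex.exp (s * c * x) := by
    refine setIntegral_congr_fun measurableSet_Ico ?_
    intro x hx
    simp only []
    rw [hV x hx, ← Complex.exp_add]
    push_cast
    ring_nf
  rw [h1, setIntegral_congr_set Ico_ae_eq_Ioc, ← intervalIntegral.integral_of_le hab,
    intervalIntegral.integral_const_mul]
  have h2 : ∀ x : ℝ, Complex.exp (s * c * x) = Complex.exp ((s * c) * x) := fun x => rfl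
  rw [integral_exp_mul_complex hsc, ← mul_div_assoc, mul_sub, ← Complex.exp_add, ← Complex.exp_add]
  congr 2 <;> push_cast <;> ring

/-- Pathwise identity for the integral of `e^{-sV(t)}` over one busy
period of a G/G/1 queue served at speed `c`. -/
theorem busy_period_workload_transform
    (c : ℝ) (hc : 0 < c) (s : ℂ) (hs : s ≠ 0)
    (N : ℕ) (hN : 1 ≤ N) (A B W t : ℕ → ℝ)
    (hA : ∀ i, 1 ≤ i → i ≤ N → 0 < A i)
    (hB : ∀ i, 1 ≤ i → i ≤ N → 0 < B i)
    (hW1 : W 1 = 0)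
    (hWrec : ∀ i, 1 ≤ i → i < N → W (i + 1) = W i + B i / c - A i)
    (hWnonneg : ∀ i, 1 ≤ i → i < N → 0 ≤ W i + B i / c - A i)
    (hI : 0 ≤ A N - (W N + B N / c))
    (ht1 : t 1 = 0)
    (htrec : ∀ i, 1 ≤ i → i < N → t (i + 1) = t i + A i)
    (P : ℝ) (hP : P = t N + W N + B N / c)
    (V : ℝ → ℝ)
    (hV : ∀ i, 1 ≤ i → i < N → ∀ x ∈ Set.Ico (t i) (t (i + 1)),
      V x = c * W i + B i - c * (x - t i))
    (hVN : ∀ x ∈ Set.Ico (t N) P, V x = c * W N + B N - c * (x - t N)) :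
    ∫ x in Set.Ico (0:ℝ) P, Complex.exp (-s * (V x : ℂ)) =
      (1 / (c * s)) * ∑ i ∈ Finset.Icc 1 N,
        Complex.exp (-s * ((c * W i : ℝ) : ℂ)) * (1 - Complex.exp (-s * ((B i : ℝ) : ℂ))) := by

  have hc' : (c : ℂ) ≠ 0 := by exact_mod_cast hc.ne'
  have hsc : (s * (c : ℂ)) ≠ 0 := mul_ne_zero hs hc'
  -- nonnegativity of W
  have hWnn : ∀ i, 1 ≤ i → i ≤ N → 0 ≤ W i := by
    intro i hi1 hiN
    match i, hi1 with
    | 1, _ => rw [hW1]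
    | (k+2), _ =>
      rw [hWrec (k+1) (by omega) (by omega)]
      exact hWnonneg (k+1) (by omega) (by omega)
  -- nonnegativity of t
  have htnn : ∀ i, 1 ≤ i → i ≤ N → 0 ≤ t i := by
    intro i hi1 hiN
    induction i with
    | zero => omega
    | succ k ih =>
      rcases Nat.lt_or_ge 1 (k+1) with h | h
      · rw [htrec k (by omega) (by omega)]
        have := hA k (by omega) (by omega)
        have := ih (by omega) (by omega)
        linarith
      · have : k + 1 = 1 := by omega
        rw [this, ht1]
  -- the right endpoints
  set σ : ℕ → ℝ := fun i => if i < N then t (i + 1) else P with hσ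
  have hσlt : ∀ i, i < N → σ i = t (i + 1) := by intro i h; simp [hσ, h]
  have hσN : σ N = P := by simp [hσ]
  have htσ : ∀ i, 1 ≤ i → i ≤ N → t i ≤ σ i := by
    intro i hi1 hiN
    rcases Nat.lt_or_ge i N with h | h
    · rw [hσlt i h, htrec i hi1 h]
      have := hA i hi1 (le_of_lt h)
      linarith
    · have hiN' : i = N := le_antisymm hiN h
      rw [hiN', hσN, hP]
      have h1 := hWnn N hN le_rfl
      have h2 := hB N hN le_rfl
      have : 0 ≤ B N / c := le_of_lt (div_pos h2 hc)
      linarith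
  -- the value of each piece
  set pc : ℕ → ℂ := fun i =>
    (Complex.exp (-s * ((c * W i + B i : ℝ) : ℂ) + s * c * ((σ i - t i : ℝ) : ℂ))
      - Complex.exp (-s * ((c * W i + B i : ℝ) : ℂ))) / (s * c) with hpc
  have hVpiece : ∀ i, 1 ≤ i → i ≤ N → ∀ x ∈ Set.Ico (t i) (σ i),
      V x = c * W i + B i - c * (x - t i) := by
    intro i hi1 hiN x hx
    rcases Nat.lt_or_ge i N with h | h
    · rw [hσlt i h] at hx; exact hV i hi1 h x hx
    · have hiN' : i = N := le_antisymm hiN h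
      rw [hiN'] at hx ⊢
      rw [hσN] at hx; exact hVN x hx
  have hpiece : ∀ i, 1 ≤ i → i ≤ N →
      ∫ x in Set.Ico (t i) (σ i), Complex.exp (-s * (V x : ℂ)) = pc i := by
    intro i hi1 hiN
    exact piece_integral c hc s hs (t i) (σ i) (W i) (B i) (htσ i hi1 hiN) V
      (hVpiece i hi1 hiN)
  have hint : ∀ i, 1 ≤ i → i ≤ N →
      IntegrableOn (fun x => Complex.exp (-s * (V x : ℂ))) (Set.Ico (t i) (σ i)) volume := by
    intro i hi1 hiN
    have hcont : Continuous (fun x : ℝ =>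
        Complex.exp (-s * ((c * W i + B i - c * (x - t i) : ℝ) : ℂ))) := by
      fun_prop
    have : IntegrableOn (fun x : ℝ =>
        Complex.exp (-s * ((c * W i + B i - c * (x - t i) : ℝ) : ℂ)))
        (Set.Ico (t i) (σ i)) volume :=
      (hcont.integrableOn_Icc).mono_set Set.Ico_subset_Icc_self
    refine this.congr_fun ?_ measurableSet_Ico
    intro x hx
    simp only []
    rw [hVpiece i hi1 hiN x hx]
  -- main induction
  have key : ∀ k, 1 ≤ k → k ≤ N →
      IntegrableOn (fun x => Complex.exp (-s * (V x : ℂ))) (Set.Ico 0 (σ k)) volume ∧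
      ∫ x in Set.Ico (0:ℝ) (σ k), Complex.exp (-s * (V x : ℂ)) =
        ∑ i ∈ Finset.Icc 1 k, pc i := by
    intro k hk1 hkN
    induction k with
    | zero => omega
    | succ m ih =>
      rcases Nat.lt_or_ge 1 (m+1) with h | h
      · -- m ≥ 1
        have hm1 : 1 ≤ m := by omega
        have hmN : m < N := by omega
        obtain ⟨ih1, ih2⟩ := ih hm1 (le_of_lt hmN)
        have hsplit : Set.Ico (0:ℝ) (σ (m+1)) =
            Set.Ico (0:ℝ) (t (m+1)) ∪ Set.Ico (t (m+1)) (σ (m+1)) := by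
          rw [Set.Ico_union_Ico_eq_Ico (htnn (m+1) (by omega) hkN) (htσ (m+1) (by omega) hkN)]
        have hσm : σ m = t (m+1) := hσlt m hmN
        have hdisj : Disjoint (Set.Ico (0:ℝ) (t (m+1))) (Set.Ico (t (m+1)) (σ (m+1))) :=
          Set.Ico_disjoint_Ico_same
        rw [hσm] at ih1 ih2
        have hintm := hint (m+1) (by omega) hkN
        constructor
        · rw [hsplit]; exact ih1.union hintm
        · rw [hsplit, setIntegral_union hdisj measurableSet_Ico ih1 hintm, ih2,
            hpiece (m+1) (by omega) hkN, Finset.sum_Icc_succ_top (by omega : 1 ≤ m + 1)]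
      · -- m + 1 = 1
        have hm0 : m = 0 := by omega
        subst hm0
        have h01 : Set.Ico (0:ℝ) (σ 1) = Set.Ico (t 1) (σ 1) := by rw [ht1]
        constructor
        · rw [h01]; exact hint 1 le_rfl hkN
        · rw [h01, hpiece 1 le_rfl hkN]; simp
  obtain ⟨_, hkey⟩ := key N hN le_rfl
  rw [hσN] at hkey
  rw [hkey]
  -- now the algebraic identity
  set G : ℕ → ℂ := fun i => if i = N + 1 then 1 else Complex.exp (-s * ((c * W i : ℝ) : ℂ)) with hG
  set H : ℕ → ℂ := fun i => Complex.exp (-s * ((c * W i + B i : ℝ) : ℂ)) with hH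
  have hpc_eq : ∀ i ∈ Finset.Icc 1 N, pc i = (G (i+1) - H i) / (s * c) := by
    intro i hi
    rw [Finset.mem_Icc] at hi
    obtain ⟨hi1, hiN⟩ := hi
    rcases Nat.lt_or_ge i N with h | h
    · have hσi : σ i = t (i+1) := hσlt i h
      have hdelta : σ i - t i = A i := by rw [hσi, htrec i hi1 h]; ring
      have hexp : -s * ((c * W i + B i : ℝ) : ℂ) + s * c * ((A i : ℝ) : ℂ)
          = -s * ((c * W (i+1) : ℝ) : ℂ) := by
        have : c * W (i+1) = c * W i + B i - c * A i := by
          rw [hWrec i hi1 h]; field_simp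
        rw [this]; push_cast; ring
      have hGi : G (i+1) = Complex.exp (-s * ((c * W (i+1) : ℝ) : ℂ)) := by
        simp only [hG]; rw [if_neg (by omega)]
      simp only [hpc, hH]
      rw [hdelta, hexp, hGi]
    · have hiN' : i = N := le_antisymm hiN h
      rw [hiN']
      have hdelta : σ N - t N = W N + B N / c := by rw [hσN, hP]; ring
      have hexp : -s * ((c * W N + B N : ℝ) : ℂ) + s * c * ((W N + B N / c : ℝ) : ℂ) = 0 := by
        have : c * (W N + B N / c) = c * W N + B N := by field_simp
        push_cast
        rw [show s * c * ((W N : ℂ) + (B N : ℂ) / c) = s * ((c:ℂ) * W N + c * ((B N:ℂ)/c)) by ring]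
        rw [show (c:ℂ) * ((B N : ℂ)/c) = B N by field_simp]
        ring
      have hGN : G (N+1) = 1 := by rw [hG]; simp
      simp only [hpc, hH]
      rw [hdelta, hexp, Complex.exp_zero, hGN]
  rw [Finset.sum_congr rfl hpc_eq]
  have htel : ∑ i ∈ Finset.Icc 1 N, (G (i+1) - G i) = G (N+1) - G 1 := by
    rw [← Finset.Ico_add_one_right_eq_Icc, Finset.sum_Ico_eq_sum_range]
    have := Finset.sum_range_sub (fun j => G (1 + j)) N
    simpa [add_comm, add_assoc, add_left_comm] using this
  have hG1 : G 1 = 1 := by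
    simp only [hG]; rw [if_neg (by omega), hW1]
    norm_num
  have hGN1 : G (N+1) = 1 := by rw [hG]; simp
  have hsum : ∑ i ∈ Finset.Icc 1 N, (G (i+1) - H i) / (s * c)
      = (∑ i ∈ Finset.Icc 1 N, (G (i+1) - G i) + ∑ i ∈ Finset.Icc 1 N, (G i - H i)) / (s * c) := by
    rw [← Finset.sum_add_distrib, ← Finset.sum_div]
    congr 1
    refine Finset.sum_congr rfl fun i _ => by ring
  rw [hsum, htel, hGN1, hG1, sub_self, zero_add, Finset.sum_div]
  rw [Finset.mul_sum]
  refine Finset.sum_congr rfl fun i hi => ?_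
  rw [Finset.mem_Icc] at hi
  have hGi : G i = Complex.exp (-s * ((c * W i : ℝ) : ℂ)) := by
    simp only [hG]; rw [if_neg (by omega)]
  simp only [hH]
  rw [hGi]
  have hHexp : Complex.exp (-s * ((c * W i + B i : ℝ) : ℂ))
      = Complex.exp (-s * ((c * W i : ℝ) : ℂ)) * Complex.exp (-s * ((B i : ℝ) : ℂ)) := by
    rw [← Complex.exp_add]; push_cast; ring_nf
  rw [hHexp]
  field_simp
end

section
/- Let K ≥ 1 be an integer, let π_1,…,π_K ≥ 0 with ∑_{i=1}^K π_i = 1, and let λ > 0, μ > 0. For 1 ≤ i, j ≤ K write Φ(i,j) := ∫∫ φ(x − y) d(Gamma(i,λ))(x) d(Gamma(j,μ))(y). Then for every convex function φ : ℝ → ℝ such that (x,y) ↦ φ(x−y) is integrable with respect to Gamma(i,λ) ⊗ Gamma(j,μ) for all 1 ≤ i, j ≤ K: ∑_{i=1}^K π_i Φ(i,i) ≤ ∑_{i=1}^K ∑_{j=1}^K π_i π_j Φ(i,j). -/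
open MeasureTheory ProbabilityTheory
open Real Set
open scoped ENNReal

section ErlangConvAux

noncomputable def epdf (n : ℕ) (r x : ℝ) : ℝ :=
  if 0 ≤ x then r ^ n * x ^ (n - 1) * Real.exp (-(r * x)) / (n - 1).factorial else 0

lemma epdf_of_neg {n : ℕ} {r x : ℝ} (hx : x < 0) : epdf n r x = 0 := by
  unfold epdf; rw [if_neg (not_le.mpr hx)]

lemma conv_density {n : ℕ} (hn : 1 ≤ n) {r : ℝ} (hr : 0 < r) {z : ℝ} (hz : z ≠ 0) :
    ∫⁻ x, ENNReal.ofReal (epdf n r x) * ENNReal.ofReal (epdf 1 r (z - x))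
      = ENNReal.ofReal (epdf (n + 1) r z) := by
  rcases lt_or_gt_of_ne hz with hz' | hz'
  · rw [epdf_of_neg hz']
    simp only [ENNReal.ofReal_zero]
    rw [← lintegral_zero]
    apply lintegral_congr
    intro x
    rcases le_or_gt 0 x with hx | hx
    · rw [epdf_of_neg (show z - x < 0 by linarith)]; simp
    · rw [epdf_of_neg hx]; simp
  · -- z > 0
    have key : ∀ x : ℝ, ENNReal.ofReal (epdf n r x) * ENNReal.ofReal (epdf 1 r (z - x))
        = (Icc 0 z).indicator
            (fun x => ENNReal.ofReal (r ^ (n+1) * Real.exp (-(r * z)) / (n-1).factorial * x ^ (n-1))) x := by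
      intro x
      rcases le_or_gt 0 x with hx | hx
      · rcases le_or_gt x z with hxz | hxz
        · rw [indicator_of_mem (mem_Icc.mpr ⟨hx, hxz⟩)]
          unfold epdf
          rw [if_pos hx, if_pos (show (0:ℝ) ≤ z - x by linarith)]
          rw [← ENNReal.ofReal_mul (by positivity)]
          congr 1
          have : Real.exp (-(r * x)) * Real.exp (-(r * (z - x))) = Real.exp (-(r * z)) := by
            rw [← Real.exp_add]; ring_nf
          simp only [pow_one, Nat.sub_self, pow_zero, Nat.factorial_zero, Nat.cast_one]
          calc r ^ n * x ^ (n - 1) * Real.exp (-(r * x)) / (n - 1).factorial *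
                (r * 1 * Real.exp (-(r * (z - x))) / 1)
              = r ^ n * r * x ^ (n-1) / (n-1).factorial *
                (Real.exp (-(r * x)) * Real.exp (-(r * (z - x)))) := by ring
            _ = _ := by rw [this, pow_succ]; ring
        · rw [indicator_of_notMem (by simp [mem_Icc]; intro; linarith)]
          rw [epdf_of_neg (show z - x < 0 by linarith)]
          simp
      · rw [indicator_of_notMem (by simp [mem_Icc]; intro; linarith)]
        rw [epdf_of_neg hx]
        simp
    simp_rw [key]
    rw [lintegral_indicator measurableSet_Icc]
    rw [← ofReal_integral_eq_lintegral_ofReal]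
    · congr 1
      have hInt : ∫ x in Icc (0:ℝ) z,
          (r ^ (n+1) * Real.exp (-(r * z)) / (n-1).factorial * x ^ (n-1))
          = r ^ (n+1) * Real.exp (-(r * z)) / (n-1).factorial * (z ^ n / n) := by
        rw [MeasureTheory.integral_Icc_eq_integral_Ioc,
          ← intervalIntegral.integral_of_le hz'.le, intervalIntegral.integral_const_mul,
          integral_pow]
        have hn1 : n - 1 + 1 = n := Nat.succ_pred_eq_of_pos hn
        rw [hn1, zero_pow (by omega), sub_zero]
        congr 1
        rw [Nat.cast_sub hn]
        push_cast
        ring_nf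
      rw [hInt]
      unfold epdf
      rw [if_pos hz'.le]
      have h2 : (n + 1 - 1 : ℕ) = n := rfl
      rw [h2]
      have hfac : ((n - 1).factorial : ℝ) ≠ 0 := by positivity
      have hnn : (n:ℝ) ≠ 0 := by positivity
      have hnfac : (n.factorial : ℝ) = n * (n-1).factorial := by
        obtain ⟨m, rfl⟩ : ∃ m, n = m + 1 := ⟨n - 1, by omega⟩
        simp [Nat.factorial_succ]
      rw [hnfac]
      field_simp
    · apply (Continuous.integrableOn_Icc ?_)
      exact continuous_const.mul (continuous_pow _)
    · filter_upwards [ae_restrict_mem measurableSet_Icc] with x hx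
      have : (0:ℝ) ≤ x := hx.1
      positivity

lemma measurable_epdf (n : ℕ) (r : ℝ) : Measurable (epdf n r) := by
  unfold epdf
  exact Measurable.ite measurableSet_Ici
    (((measurable_const.mul (measurable_id.pow_const _)).mul
      ((measurable_id.const_mul r).neg.exp)).div measurable_const) measurable_const

lemma gammaPDF_eq_epdf {n : ℕ} (hn : 1 ≤ n) (r : ℝ) (x : ℝ) :
    gammaPDF (n : ℝ) r x = ENNReal.ofReal (epdf n r x) := by
  have h1 : ((n - 1 : ℕ) : ℝ) = (n : ℝ) - 1 := by
    rw [Nat.cast_sub hn]; norm_num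
  have hG : Real.Gamma (n : ℝ) = (n - 1).factorial := by
    rw [← Real.Gamma_nat_eq_factorial (n - 1), h1]; norm_num
  rcases le_or_gt 0 x with hx | hx
  · rw [gammaPDF_of_nonneg hx]
    unfold epdf
    rw [if_pos hx, ← h1, Real.rpow_natCast, Real.rpow_natCast, hG]
    congr 1
    ring
  · rw [gammaPDF_of_neg hx]
    unfold epdf
    rw [if_neg (not_le.mpr hx)]
    simp

lemma epdf_measure {n : ℕ} (hn : 1 ≤ n) (r : ℝ) :
    gammaMeasure (n : ℝ) r = volume.withDensity (fun x => ENNReal.ofReal (epdf n r x)) := by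
  unfold gammaMeasure
  congr 1
  funext x
  exact gammaPDF_eq_epdf hn r x

lemma conv_one {n : ℕ} (hn : 1 ≤ n) {r : ℝ} (hr : 0 < r) :
    Measure.map (fun p : ℝ × ℝ => p.1 + p.2)
      ((gammaMeasure (n : ℝ) r).prod (gammaMeasure (1 : ℝ) r))
      = gammaMeasure ((n + 1 : ℕ) : ℝ) r := by
  have hfm : Measurable (fun x => ENNReal.ofReal (epdf n r x)) :=
    (measurable_epdf n r).ennreal_ofReal
  have hgm : Measurable (fun x => ENNReal.ofReal (epdf 1 r x)) :=
    (measurable_epdf 1 r).ennreal_ofReal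
  have hhm : Measurable (fun x => ENNReal.ofReal (epdf (n+1) r x)) :=
    (measurable_epdf (n+1) r).ennreal_ofReal
  rw [show (1:ℝ) = ((1:ℕ):ℝ) by norm_num]
  rw [epdf_measure hn r, epdf_measure le_rfl r, epdf_measure (Nat.le_add_left 1 n) r]
  set f : ℝ → ℝ≥0∞ := fun x => ENNReal.ofReal (epdf n r x)
  set g : ℝ → ℝ≥0∞ := fun x => ENNReal.ofReal (epdf 1 r x)
  ext s hs
  have hind : Measurable (s.indicator (1 : ℝ → ℝ≥0∞)) :=
    measurable_one.indicator hs
  rw [Measure.map_apply (by fun_prop) hs, withDensity_apply _ hs]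
  rw [← lintegral_indicator_one (by exact (measurable_fst.add measurable_snd) hs)]
  have step1 : ∫⁻ (a : ℝ × ℝ), ((fun p : ℝ × ℝ => p.1 + p.2) ⁻¹' s).indicator 1 a
        ∂((volume.withDensity f).prod (volume.withDensity g))
      = ∫⁻ x, ∫⁻ y, s.indicator 1 (x + y)
          ∂(volume.withDensity g) ∂(volume.withDensity f) := by
    have hpt : ∀ a : ℝ × ℝ, ((fun p : ℝ × ℝ => p.1 + p.2) ⁻¹' s).indicator (1 : ℝ × ℝ → ℝ≥0∞) a
        = s.indicator (1 : ℝ → ℝ≥0∞) (a.1 + a.2) := by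
      intro a; by_cases h : a.1 + a.2 ∈ s <;> simp [Set.indicator, h, Set.mem_preimage]
    simp_rw [hpt]
    rw [lintegral_prod _ ((show Measurable fun p : ℝ × ℝ => s.indicator 1 (p.1 + p.2) from
      hind.comp (measurable_fst.add measurable_snd)).aemeasurable)]
  rw [step1]
  have step2 : ∀ x : ℝ, ∫⁻ y, s.indicator 1 (x + y) ∂(volume.withDensity g)
      = ∫⁻ y, g y * s.indicator 1 (x + y) := by
    intro x
    rw [lintegral_withDensity_eq_lintegral_mul _ hgm
      (show Measurable fun y : ℝ => s.indicator 1 (x + y) from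
        hind.comp (measurable_const.add measurable_id))]
    rfl
  simp_rw [step2]
  rw [lintegral_withDensity_eq_lintegral_mul _ hfm]
  swap
  · exact (show Measurable fun p : ℝ × ℝ => g p.2 * s.indicator 1 (p.1 + p.2) from
      (hgm.comp measurable_snd).mul
        (hind.comp (measurable_fst.add measurable_snd))).lintegral_prod_right'
  have step3 : ∀ x : ℝ, (f * fun x => ∫⁻ y, g y * s.indicator 1 (x + y)) x
      = ∫⁻ z, f x * g (z - x) * s.indicator 1 z := by
    intro x
    simp only [Pi.mul_apply]
    rw [← lintegral_const_mul (f x) (show Measurable fun y : ℝ => g y * s.indicator 1 (x + y) from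
      hgm.mul (hind.comp (measurable_const.add measurable_id)))]
    have := lintegral_add_right_eq_self (μ := volume)
      (fun z => f x * g (z - x) * s.indicator 1 z) x
    rw [← this]
    apply lintegral_congr
    intro y
    simp only [add_sub_cancel_right]
    ring
  simp_rw [step3]
  rw [lintegral_lintegral_swap]
  swap
  · apply Measurable.aemeasurable
    apply Measurable.mul
    · exact (hfm.comp measurable_fst).mul
        (hgm.comp (measurable_snd.sub measurable_fst))
    · exact hind.comp measurable_snd
  have step4 : ∀ᵐ z : ℝ, (∫⁻ x, f x * g (z - x) * s.indicator 1 z)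
      = s.indicator 1 z * ENNReal.ofReal (epdf (n+1) r z) := by
    filter_upwards [compl_mem_ae_iff.mpr (volume_singleton (a := (0:ℝ)))] with z hz
    have hz0 : z ≠ 0 := by simpa using hz
    calc ∫⁻ x, f x * g (z - x) * s.indicator 1 z
        = s.indicator 1 z * ∫⁻ x, f x * g (z - x) := by
          rw [← lintegral_const_mul (s.indicator 1 z)
            (show Measurable fun x : ℝ => f x * g (z - x) from
              hfm.mul (hgm.comp (measurable_const.sub measurable_id)))]
          apply lintegral_congr; intro x; ring
      _ = _ := by rw [conv_density hn hr hz0]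
  rw [lintegral_congr_ae step4, ← lintegral_indicator (hs) _]
  apply lintegral_congr
  intro z
  by_cases h : z ∈ s <;> simp [h]

lemma gamma_prob {n : ℕ} (hn : 1 ≤ n) {r : ℝ} (hr : 0 < r) :
    IsProbabilityMeasure (gammaMeasure (n : ℝ) r) :=
  isProbabilityMeasure_gammaMeasure (by exact_mod_cast Nat.pos_of_ne_zero (by omega)) hr

lemma conv_gen {n m : ℕ} (hn : 1 ≤ n) (hm : 1 ≤ m) {r : ℝ} (hr : 0 < r) :
    Measure.map (fun p : ℝ × ℝ => p.1 + p.2)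
      ((gammaMeasure (n : ℝ) r).prod (gammaMeasure (m : ℝ) r))
      = gammaMeasure ((n + m : ℕ) : ℝ) r := by
  induction m with
  | zero => omega
  | succ m ih =>
    rcases Nat.eq_zero_or_pos m with hm0 | hm1
    · subst hm0
      rw [show ((0 + 1 : ℕ) : ℝ) = (1 : ℝ) by norm_num, conv_one hn hr]
    · haveI := gamma_prob hn hr
      haveI := gamma_prob hm1 (r := r) hr
      haveI := isProbabilityMeasure_gammaMeasure one_pos hr
      haveI := gamma_prob (show 1 ≤ n + m by omega) (r := r) hr
      have hmadd : Measurable (fun p : ℝ × ℝ => p.1 + p.2) :=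
        measurable_fst.add measurable_snd
      rw [show ((m + 1 : ℕ) : ℝ) = (((m + 1 : ℕ) : ℕ) : ℝ) from rfl,
        (conv_one hm1 hr).symm]
      have h2 : (gammaMeasure (n : ℝ) r).prod
            (Measure.map (fun p : ℝ × ℝ => p.1 + p.2)
              ((gammaMeasure (m : ℝ) r).prod (gammaMeasure (1 : ℝ) r)))
          = Measure.map (Prod.map id (fun p : ℝ × ℝ => p.1 + p.2))
              ((gammaMeasure (n : ℝ) r).prod
                ((gammaMeasure (m : ℝ) r).prod (gammaMeasure (1 : ℝ) r))) := by
        haveI : IsProbabilityMeasure (Measure.map (fun p : ℝ × ℝ => p.1 + p.2)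
            ((gammaMeasure (m : ℝ) r).prod (gammaMeasure (1 : ℝ) r))) :=
          Measure.isProbabilityMeasure_map hmadd.aemeasurable
        exact ((MeasurePreserving.id _).prod ⟨hmadd, rfl⟩).map_eq.symm
      rw [h2, Measure.map_map hmadd (measurable_id.prodMap hmadd)]
      have h3 : (gammaMeasure (n : ℝ) r).prod
            ((gammaMeasure (m : ℝ) r).prod (gammaMeasure (1 : ℝ) r))
          = Measure.map (⇑MeasurableEquiv.prodAssoc)
            (((gammaMeasure (n : ℝ) r).prod (gammaMeasure (m : ℝ) r)).prod
              (gammaMeasure (1 : ℝ) r)) :=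
        (measurePreserving_prodAssoc _ _ _).map_eq.symm
      rw [h3, Measure.map_map (by fun_prop) (MeasurableEquiv.prodAssoc).measurable]
      have h4 : ((fun p : ℝ × ℝ => p.1 + p.2) ∘ Prod.map id (fun p : ℝ × ℝ => p.1 + p.2))
            ∘ ⇑MeasurableEquiv.prodAssoc
          = (fun p : ℝ × ℝ => p.1 + p.2) ∘ Prod.map (fun p : ℝ × ℝ => p.1 + p.2) id := by
        funext p
        simp [MeasurableEquiv.prodAssoc, Function.comp, Prod.map]
        ring
      rw [h4, ← Measure.map_map hmadd (hmadd.prodMap measurable_id)]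
      have h5 : Measure.map (Prod.map (fun p : ℝ × ℝ => p.1 + p.2) id)
            (((gammaMeasure (n : ℝ) r).prod (gammaMeasure (m : ℝ) r)).prod
              (gammaMeasure (1 : ℝ) r))
          = (gammaMeasure ((n + m : ℕ) : ℝ) r).prod (gammaMeasure (1 : ℝ) r) :=
        (MeasurePreserving.prod ⟨hmadd, ih hm1⟩ (MeasurePreserving.id _)).map_eq
      rw [h5, conv_one (show 1 ≤ n + m by omega) hr]
      congr 1

lemma gamma_ae_nonneg {n : ℕ} (hn : 1 ≤ n) {r : ℝ} (hr : 0 < r) :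
    ∀ᵐ x ∂(gammaMeasure (n : ℝ) r), 0 ≤ x := by
  rw [ae_iff]
  have : {x : ℝ | ¬ 0 ≤ x} = Iio 0 := by ext x; simp
  rw [this]
  unfold gammaMeasure
  rw [withDensity_apply _ measurableSet_Iio]
  exact lintegral_gammaPDF_of_nonpos le_rfl

lemma convex_ineq {φ : ℝ → ℝ} (hconv : ConvexOn ℝ Set.univ φ) {u b e : ℝ}
    (hb : 0 ≤ b) (he : 0 ≤ e) :
    φ (u + e) + φ (u + b) ≤ φ u + φ (u + e + b) := by
  rcases eq_or_lt_of_le (add_nonneg he hb) with h0 | h0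
  · have he0 : e = 0 := by linarith
    have hb0 : b = 0 := by linarith
    simp [he0, hb0]
  · set s := e + b with hs
    have h1 : φ (u + e) ≤ (b / s) * φ u + (e / s) * φ (u + s) := by
      have := hconv.2 (Set.mem_univ u) (Set.mem_univ (u + s))
        (div_nonneg hb h0.le) (div_nonneg he h0.le)
        (by field_simp; try linarith)
      simpa [smul_eq_mul, show (b / s) * u + (e / s) * (u + s) = u + e by
        field_simp; ring] using this
    have h2 : φ (u + b) ≤ (e / s) * φ u + (b / s) * φ (u + s) := by
      have := hconv.2 (Set.mem_univ u) (Set.mem_univ (u + s))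
        (div_nonneg he h0.le) (div_nonneg hb h0.le)
        (by field_simp; try linarith)
      simpa [smul_eq_mul, show (e / s) * u + (b / s) * (u + s) = u + b by
        field_simp; ring] using this
    have hsum : (b / s) + (e / s) = 1 := by field_simp; try linarith
    have := add_le_add h1 h2
    calc φ (u + e) + φ (u + b) ≤ (b / s) * φ u + (e / s) * φ (u + s)
          + ((e / s) * φ u + (b / s) * φ (u + s)) := this
      _ = ((b / s) + (e / s)) * φ u + ((e / s) + (b / s)) * φ (u + s) := by ring
      _ = φ u + φ (u + s) := by rw [hsum, add_comm (e/s) (b/s), hsum]; ring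
      _ = φ u + φ (u + e + b) := by rw [hs, add_assoc]

lemma convex_ineq' {φ : ℝ → ℝ} (hconv : ConvexOn ℝ Set.univ φ) {a b c e : ℝ}
    (hb : 0 ≤ b) (he : 0 ≤ e) :
    φ (a - c) + φ (a + b - (c + e)) ≤ φ (a - (c + e)) + φ (a + b - c) := by
  have h1 : a - c = a - (c + e) + e := by ring
  have h2 : a + b - (c + e) = a - (c + e) + b := by ring
  have h3 : a + b - c = a - (c + e) + e + b := by ring
  rw [h1, h2, h3]
  exact convex_ineq hconv hb he

lemma mp_fst {α β : Type*} [MeasurableSpace α] [MeasurableSpace β]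
    {μ : Measure α} {ν : Measure β} [SFinite μ] [IsProbabilityMeasure ν] :
    MeasurePreserving Prod.fst (μ.prod ν) μ :=
  ⟨measurable_fst, by rw [Measure.map_fst_prod, measure_univ, one_smul]⟩

lemma mp_snd {α β : Type*} [MeasurableSpace α] [MeasurableSpace β]
    {μ : Measure α} {ν : Measure β} [IsProbabilityMeasure μ] [SFinite ν] :
    MeasurePreserving Prod.snd (μ.prod ν) ν :=
  ⟨measurable_snd, by rw [Measure.map_snd_prod, measure_univ, one_smul]⟩

lemma pairwise_ineq {i j : ℕ} (hi : 1 ≤ i) (hij : i ≤ j) {lam mu : ℝ}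
    (hlam : 0 < lam) (hmu : 0 < mu) {φ : ℝ → ℝ} (hconv : ConvexOn ℝ Set.univ φ)
    (hii : Integrable (fun p : ℝ × ℝ => φ (p.1 - p.2))
      ((gammaMeasure (i : ℝ) lam).prod (gammaMeasure (i : ℝ) mu)))
    (hjj : Integrable (fun p : ℝ × ℝ => φ (p.1 - p.2))
      ((gammaMeasure (j : ℝ) lam).prod (gammaMeasure (j : ℝ) mu)))
    (hij' : Integrable (fun p : ℝ × ℝ => φ (p.1 - p.2))
      ((gammaMeasure (i : ℝ) lam).prod (gammaMeasure (j : ℝ) mu)))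
    (hji : Integrable (fun p : ℝ × ℝ => φ (p.1 - p.2))
      ((gammaMeasure (j : ℝ) lam).prod (gammaMeasure (i : ℝ) mu))) :
    (∫ p : ℝ × ℝ, φ (p.1 - p.2) ∂((gammaMeasure (i : ℝ) lam).prod (gammaMeasure (i : ℝ) mu)))
      + ∫ p : ℝ × ℝ, φ (p.1 - p.2) ∂((gammaMeasure (j : ℝ) lam).prod (gammaMeasure (j : ℝ) mu))
    ≤ (∫ p : ℝ × ℝ, φ (p.1 - p.2) ∂((gammaMeasure (i : ℝ) lam).prod (gammaMeasure (j : ℝ) mu)))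
      + ∫ p : ℝ × ℝ, φ (p.1 - p.2) ∂((gammaMeasure (j : ℝ) lam).prod (gammaMeasure (i : ℝ) mu)) := by
  rcases eq_or_lt_of_le hij with rfl | hlt
  · linarith
  obtain ⟨d, rfl⟩ : ∃ d, j = i + d := ⟨j - i, by omega⟩
  have hd : 1 ≤ d := by omega
  haveI := gamma_prob hi hlam
  haveI := gamma_prob hi hmu
  haveI := gamma_prob hd hlam
  haveI := gamma_prob hd hmu
  haveI := gamma_prob (show 1 ≤ i + d by omega) hlam
  haveI := gamma_prob (show 1 ≤ i + d by omega) hmu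
  have φcont : Continuous φ := by
    rw [← continuousOn_univ]
    exact hconv.continuousOn isOpen_univ
  have hsm : ∀ (ν : Measure (ℝ × ℝ)),
      AEStronglyMeasurable (fun p : ℝ × ℝ => φ (p.1 - p.2)) ν := fun ν =>
    (φcont.comp (continuous_fst.sub continuous_snd)).aestronglyMeasurable
  set P := ((gammaMeasure (i : ℝ) lam).prod (gammaMeasure (d : ℝ) lam)).prod
    ((gammaMeasure (i : ℝ) mu).prod (gammaMeasure (d : ℝ) mu)) with hP
  have hmadd : Measurable (fun p : ℝ × ℝ => p.1 + p.2) := measurable_fst.add measurable_snd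
  have addlam : MeasurePreserving (fun p : ℝ × ℝ => p.1 + p.2)
      ((gammaMeasure (i : ℝ) lam).prod (gammaMeasure (d : ℝ) lam))
      (gammaMeasure ((i + d : ℕ) : ℝ) lam) := ⟨hmadd, conv_gen hi hd hlam⟩
  have addmu : MeasurePreserving (fun p : ℝ × ℝ => p.1 + p.2)
      ((gammaMeasure (i : ℝ) mu).prod (gammaMeasure (d : ℝ) mu))
      (gammaMeasure ((i + d : ℕ) : ℝ) mu) := ⟨hmadd, conv_gen hi hd hmu⟩
  have m11 : MeasurePreserving (Prod.map (Prod.fst : ℝ × ℝ → ℝ) (Prod.fst : ℝ × ℝ → ℝ)) P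
      ((gammaMeasure (i : ℝ) lam).prod (gammaMeasure (i : ℝ) mu)) := mp_fst.prod mp_fst
  have m22 : MeasurePreserving
      (Prod.map (fun p : ℝ × ℝ => p.1 + p.2) (fun p : ℝ × ℝ => p.1 + p.2)) P
      ((gammaMeasure ((i + d : ℕ) : ℝ) lam).prod (gammaMeasure ((i + d : ℕ) : ℝ) mu)) :=
    addlam.prod addmu
  have m12 : MeasurePreserving (Prod.map (Prod.fst : ℝ × ℝ → ℝ) (fun p : ℝ × ℝ => p.1 + p.2)) P
      ((gammaMeasure (i : ℝ) lam).prod (gammaMeasure ((i + d : ℕ) : ℝ) mu)) :=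
    mp_fst.prod addmu
  have m21 : MeasurePreserving (Prod.map (fun p : ℝ × ℝ => p.1 + p.2) (Prod.fst : ℝ × ℝ → ℝ)) P
      ((gammaMeasure ((i + d : ℕ) : ℝ) lam).prod (gammaMeasure (i : ℝ) mu)) :=
    addlam.prod mp_fst
  -- rewrite the four integrals over P
  have key : ∀ {ν : Measure (ℝ × ℝ)} (T : (ℝ × ℝ) × (ℝ × ℝ) → ℝ × ℝ)
      (mp : MeasurePreserving T P ν),
      ∫ p : ℝ × ℝ, φ (p.1 - p.2) ∂ν = ∫ ω, φ ((T ω).1 - (T ω).2) ∂P := by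
    intro ν T mp
    rw [← mp.map_eq, integral_map mp.measurable.aemeasurable (by rw [mp.map_eq]; exact hsm _)]
  have e11 := key _ m11
  have e22 := key _ m22
  have e12 := key _ m12
  have e21 := key _ m21
  -- integrability of composed maps
  have I11 : Integrable (fun ω : (ℝ × ℝ) × (ℝ × ℝ) =>
      φ ((Prod.map (Prod.fst : ℝ × ℝ → ℝ) (Prod.fst : ℝ × ℝ → ℝ) ω).1
        - (Prod.map (Prod.fst : ℝ × ℝ → ℝ) (Prod.fst : ℝ × ℝ → ℝ) ω).2)) P :=
    (m11.integrable_comp (hsm _)).mpr hii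
  have I22 : Integrable (fun ω : (ℝ × ℝ) × (ℝ × ℝ) =>
      φ ((Prod.map (fun p : ℝ × ℝ => p.1 + p.2) (fun p : ℝ × ℝ => p.1 + p.2) ω).1
        - (Prod.map (fun p : ℝ × ℝ => p.1 + p.2) (fun p : ℝ × ℝ => p.1 + p.2) ω).2)) P :=
    (m22.integrable_comp (hsm _)).mpr hjj
  have I12 : Integrable (fun ω : (ℝ × ℝ) × (ℝ × ℝ) =>
      φ ((Prod.map (Prod.fst : ℝ × ℝ → ℝ) (fun p : ℝ × ℝ => p.1 + p.2) ω).1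
        - (Prod.map (Prod.fst : ℝ × ℝ → ℝ) (fun p : ℝ × ℝ => p.1 + p.2) ω).2)) P :=
    (m12.integrable_comp (hsm _)).mpr hij'
  have I21 : Integrable (fun ω : (ℝ × ℝ) × (ℝ × ℝ) =>
      φ ((Prod.map (fun p : ℝ × ℝ => p.1 + p.2) (Prod.fst : ℝ × ℝ → ℝ) ω).1
        - (Prod.map (fun p : ℝ × ℝ => p.1 + p.2) (Prod.fst : ℝ × ℝ → ℝ) ω).2)) P :=
    (m21.integrable_comp (hsm _)).mpr hji
  -- a.e. nonnegativity of the increments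
  have hb : ∀ᵐ ω : (ℝ × ℝ) × (ℝ × ℝ) ∂P, 0 ≤ ω.1.2 := by
    have mp : MeasurePreserving (Prod.snd ∘ Prod.fst) P (gammaMeasure (d : ℝ) lam) :=
      mp_snd.comp mp_fst
    have h := gamma_ae_nonneg hd hlam
    rw [← mp.map_eq] at h
    exact (ae_map_iff mp.measurable.aemeasurable measurableSet_Ici).mp h
  have he : ∀ᵐ ω : (ℝ × ℝ) × (ℝ × ℝ) ∂P, 0 ≤ ω.2.2 := by
    have mp : MeasurePreserving (Prod.snd ∘ Prod.snd) P (gammaMeasure (d : ℝ) mu) :=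
      mp_snd.comp mp_snd
    have h := gamma_ae_nonneg hd hmu
    rw [← mp.map_eq] at h
    exact (ae_map_iff mp.measurable.aemeasurable measurableSet_Ici).mp h
  rw [e11, e22, e12, e21, ← integral_add I11 I22, ← integral_add I12 I21]
  apply integral_mono_ae (I11.add I22) (I12.add I21)
  filter_upwards [hb, he] with ω h1 h2
  simpa [Prod.map] using convex_ineq' hconv h1 h2

end ErlangConvAux

/-- Convex-order inequality `D₊ ≼_cx D₀`: for any convex test function
`φ`, the `π`-average of `Φ(i,i)` is at most the `π ⊗ π`-average of `Φ(i,j)`, where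
`Φ(i,j) = ∫∫ φ(x - y) dErlang(i,λ)(x) dErlang(j,μ)(y)`. -/
theorem positively_correlated_convex_order
    (K : ℕ) (hK : 1 ≤ K) (pr : ℕ → ℝ)
    (hpr : ∀ i ∈ Finset.Icc 1 K, 0 ≤ pr i)
    (hprsum : ∑ i ∈ Finset.Icc 1 K, pr i = 1)
    (lam mu : ℝ) (hlam : 0 < lam) (hmu : 0 < mu)
    (φ : ℝ → ℝ) (hconv : ConvexOn ℝ Set.univ φ)
    (hint : ∀ i ∈ Finset.Icc 1 K, ∀ j ∈ Finset.Icc 1 K,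
      Integrable (fun p : ℝ × ℝ => φ (p.1 - p.2))
        ((gammaMeasure (i : ℝ) lam).prod (gammaMeasure (j : ℝ) mu))) :
    ∑ i ∈ Finset.Icc 1 K, pr i *
        ∫ p : ℝ × ℝ, φ (p.1 - p.2) ∂((gammaMeasure (i : ℝ) lam).prod (gammaMeasure (i : ℝ) mu)) ≤
      ∑ i ∈ Finset.Icc 1 K, ∑ j ∈ Finset.Icc 1 K, pr i * pr j *
        ∫ p : ℝ × ℝ, φ (p.1 - p.2) ∂((gammaMeasure (i : ℝ) lam).prod (gammaMeasure (j : ℝ) mu)) := by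
  set s := Finset.Icc 1 K with hsdef
  set Φ : ℕ → ℕ → ℝ := fun i j =>
    ∫ p : ℝ × ℝ, φ (p.1 - p.2) ∂((gammaMeasure (i : ℝ) lam).prod (gammaMeasure (j : ℝ) mu))
    with hΦ
  have key : ∀ i ∈ s, ∀ j ∈ s, Φ i i + Φ j j ≤ Φ i j + Φ j i := by
    intro i hi j hj
    have hi1 : 1 ≤ i := (Finset.mem_Icc.mp hi).1
    have hj1 : 1 ≤ j := (Finset.mem_Icc.mp hj).1
    rcases le_total i j with h | h
    · exact pairwise_ineq hi1 h hlam hmu hconv (hint i hi i hi) (hint j hj j hj)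
        (hint i hi j hj) (hint j hj i hi)
    · have := pairwise_ineq hj1 h hlam hmu hconv (hint j hj j hj) (hint i hi i hi)
        (hint j hj i hi) (hint i hi j hj)
      linarith
  have lhs_eq : ∑ i ∈ s, pr i * Φ i i
      = ∑ i ∈ s, ∑ j ∈ s, pr i * pr j * ((Φ i i + Φ j j) / 2) := by
    have inner : ∀ i ∈ s, ∑ j ∈ s, pr i * pr j * ((Φ i i + Φ j j) / 2)
        = pr i * Φ i i / 2 + pr i * (∑ j ∈ s, pr j * Φ j j) / 2 := by
      intro i hi
      have h1 : ∀ j ∈ s, pr i * pr j * ((Φ i i + Φ j j) / 2)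
          = pr i * Φ i i / 2 * pr j + pr i / 2 * (pr j * Φ j j) := by intros; ring
      rw [Finset.sum_congr rfl h1, Finset.sum_add_distrib, ← Finset.mul_sum, ← Finset.mul_sum,
        hprsum]
      ring
    rw [Finset.sum_congr rfl inner, Finset.sum_add_distrib]
    have h2 : ∑ i ∈ s, pr i * Φ i i / 2 = (∑ i ∈ s, pr i * Φ i i) / 2 := by
      rw [Finset.sum_div]
    have h3 : ∑ i ∈ s, pr i * (∑ j ∈ s, pr j * Φ j j) / 2
        = (∑ i ∈ s, pr i) * ((∑ j ∈ s, pr j * Φ j j) / 2) := by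
      rw [Finset.sum_mul]
      apply Finset.sum_congr rfl
      intros; ring
    rw [h2, h3, hprsum]
    ring
  have swap : ∑ i ∈ s, ∑ j ∈ s, pr i * pr j * Φ j i
      = ∑ i ∈ s, ∑ j ∈ s, pr i * pr j * Φ i j := by
    rw [Finset.sum_comm]
    apply Finset.sum_congr rfl
    intro i _
    apply Finset.sum_congr rfl
    intro j _
    ring
  calc ∑ i ∈ s, pr i * Φ i i
      = ∑ i ∈ s, ∑ j ∈ s, pr i * pr j * ((Φ i i + Φ j j) / 2) := lhs_eq
    _ ≤ ∑ i ∈ s, ∑ j ∈ s, pr i * pr j * ((Φ i j + Φ j i) / 2) := by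
        apply Finset.sum_le_sum
        intro i hi
        apply Finset.sum_le_sum
        intro j hj
        have h := key i hi j hj
        have hnn : 0 ≤ pr i * pr j := mul_nonneg (hpr i hi) (hpr j hj)
        apply mul_le_mul_of_nonneg_left _ hnn
        linarith
    _ = (∑ i ∈ s, ∑ j ∈ s, pr i * pr j * Φ i j) / 2
        + (∑ i ∈ s, ∑ j ∈ s, pr i * pr j * Φ j i) / 2 := by
        symm
        rw [Finset.sum_div, Finset.sum_div, ← Finset.sum_add_distrib]
        apply Finset.sum_congr rfl
        intro i _
        rw [Finset.sum_div, Finset.sum_div, ← Finset.sum_add_distrib]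
        apply Finset.sum_congr rfl
        intro j _
        ring
    _ = ∑ i ∈ s, ∑ j ∈ s, pr i * pr j * Φ i j := by
        rw [swap]
        ring
end

section
/- Let λ > 0, μ > 0 and let i < j be positive integers. For positive integers k, l write Φ(k,l) := ∫∫ φ(x − y) d(Gamma(k,λ))(x) d(Gamma(l,μ))(y). Then for every convex, monotone increasing function φ : ℝ → ℝ such that (x,y) ↦ φ(x−y) is integrable with respect to Gamma(k,λ) ⊗ Gamma(l,μ) for k, l ∈ {i, j}: Φ(i,i) + Φ(j,j) ≤ Φ(i,j) + Φ(j,i). -/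
open MeasureTheory ProbabilityTheory Real
open scoped ENNReal NNReal


/-- Convex rearrangement: if `a ≤ b ≤ c`, then `φ b + φ (a+c-b) ≤ φ a + φ c`. -/
lemma convex_rearrange {φ : ℝ → ℝ} (hconv : ConvexOn ℝ Set.univ φ)
    {a b c : ℝ} (hab : a ≤ b) (hbc : b ≤ c) :
    φ b + φ (a + c - b) ≤ φ a + φ c := by
  rcases eq_or_lt_of_le (hab.trans hbc) with h | hac
  · have h1 : a = b := le_antisymm hab (h ▸ hbc)
    subst h1
    have : a = c := h
    subst this
    norm_num
  · set t : ℝ := (c - b) / (c - a) with ht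
    have hca : 0 < c - a := by linarith
    have ht0 : 0 ≤ t := div_nonneg (by linarith) hca.le
    have ht1 : t ≤ 1 := by
      rw [ht, div_le_one hca]; linarith
    have key : t * (c - a) = c - b := div_mul_cancel₀ _ hca.ne'
    have hb : t * a + (1 - t) * c = b := by linear_combination -key
    have hb' : (1 - t) * a + t * c = a + c - b := by linear_combination key
    have h1 := hconv.2 (Set.mem_univ a) (Set.mem_univ c) ht0 (by linarith : (0:ℝ) ≤ 1 - t)
      (by ring)
    have h2 := hconv.2 (Set.mem_univ a) (Set.mem_univ c) (by linarith : (0:ℝ) ≤ 1 - t) ht0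
      (by ring)
    simp only [smul_eq_mul] at h1 h2
    rw [hb] at h1
    rw [hb'] at h2
    linarith

/-- Linear lower bound for a monotone convex function. -/
lemma convex_lower_bound {φ : ℝ → ℝ} (hconv : ConvexOn ℝ Set.univ φ)
    (hmono : Monotone φ) (t : ℝ) :
    φ 0 - (φ 1 - φ 0) * |t| ≤ φ t := by
  set m : ℝ := φ 1 - φ 0 with hm
  have hm0 : 0 ≤ m := by have := hmono (by norm_num : (0:ℝ) ≤ 1); linarith
  rcases le_or_gt 0 t with h | h
  · have := hmono h
    nlinarith [abs_nonneg t]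
  · have hslope := hconv.slope_mono_adjacent (Set.mem_univ t) (Set.mem_univ 1)
      h (by norm_num)
    have habs : |t| = -t := abs_of_neg h
    rw [habs]
    have ht : 0 < -t := by linarith
    rw [zero_sub, sub_zero, div_one] at hslope
    have h2 := (div_le_iff₀ ht).mp hslope
    rw [← hm] at h2
    linarith


lemma gamma_ae_nonneg_s10 (a r : ℝ) : ∀ᵐ y ∂gammaMeasure a r, 0 ≤ y := by
  rw [ae_iff]
  have h : {y : ℝ | ¬ 0 ≤ y} = Set.Iio 0 := by ext y; simp [not_le]
  rw [h, gammaMeasure, withDensity_apply _ measurableSet_Iio]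
  exact lintegral_gammaPDF_of_nonpos le_rfl

lemma integrable_gamma_iff {a r : ℝ} (ha : 0 < a) (hr : 0 < r) {g : ℝ → ℝ} :
    Integrable g (gammaMeasure a r) ↔
      Integrable (fun x => g x * gammaPDFReal a r x) volume := by
  have hm : Measurable (gammaPDF a r) := (measurable_gammaPDFReal a r).ennreal_ofReal
  rw [gammaMeasure, integrable_withDensity_iff hm (ae_of_all _ fun x => ENNReal.ofReal_lt_top)]
  apply integrable_congr
  filter_upwards with x
  rw [gammaPDF, ENNReal.toReal_ofReal (gammaPDFReal_nonneg ha hr x)]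

lemma integral_gamma_eq (a r : ℝ) (ha : 0 < a) (hr : 0 < r) (g : ℝ → ℝ) :
    ∫ x, g x ∂gammaMeasure a r = ∫ x, g x * gammaPDFReal a r x := by
  have hd : gammaMeasure a r
      = volume.withDensity (fun x => ((gammaPDFReal a r x).toNNReal : ℝ≥0∞)) := rfl
  rw [hd, integral_withDensity_eq_integral_smul (measurable_gammaPDFReal a r).real_toNNReal g]
  congr 1
  ext x
  rw [NNReal.smul_def, smul_eq_mul, Real.coe_toNNReal _ (gammaPDFReal_nonneg ha hr x), mul_comm]

lemma integrable_gammaPDFReal {a r : ℝ} (ha : 0 < a) (hr : 0 < r) :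
    Integrable (gammaPDFReal a r) volume := by
  refine ⟨(measurable_gammaPDFReal a r).aestronglyMeasurable, ?_⟩
  rw [hasFiniteIntegral_iff_ofReal (ae_of_all _ (gammaPDFReal_nonneg ha hr))]
  have h : (∫⁻ x, ENNReal.ofReal (gammaPDFReal a r x)) = 1 := lintegral_gammaPDF_eq_one ha hr
  rw [h]
  exact ENNReal.one_lt_top

lemma integrable_id_gamma {n : ℕ} (hn : 1 ≤ n) {r : ℝ} (hr : 0 < r) :
    Integrable (fun y : ℝ => y) (gammaMeasure (n : ℝ) r) := by
  have hn0 : (0:ℝ) < n := by exact_mod_cast hn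
  rw [integrable_gamma_iff hn0 hr]
  have key : ∀ y : ℝ, y * gammaPDFReal (n : ℝ) r y
      = ((n : ℝ)/r) * gammaPDFReal ((n : ℝ) + 1) r y := by
    intro y
    rcases lt_trichotomy y 0 with hy | hy | hy
    · simp [gammaPDFReal, not_le.mpr hy]
    · subst hy
      have h1 : ((0:ℝ)) ^ ((n:ℝ) + 1 - 1) = 0 := by
        rw [add_sub_cancel_right]
        exact Real.zero_rpow (by positivity)
      simp [gammaPDFReal, h1, Nat.one_le_iff_ne_zero.mp hn]
    · simp only [gammaPDFReal, if_pos hy.le]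
      have hG : Gamma ((n:ℝ) + 1) = n * Gamma (n : ℝ) := Gamma_add_one hn0.ne'
      have hr1 : r ^ ((n:ℝ) + 1) = r ^ (n:ℝ) * r := by
        rw [Real.rpow_add_one hr.ne']
      have hy1 : y ^ ((n:ℝ) + 1 - 1) = y ^ ((n:ℝ) - 1) * y := by
        rw [add_sub_cancel_right, ← Real.rpow_add_one hy.ne', sub_add_cancel]
      rw [hG, hr1, hy1]
      have hGn : Gamma (n:ℝ) ≠ 0 := (Gamma_pos_of_pos hn0).ne'
      field_simp
  simp_rw [key]
  exact (integrable_gammaPDFReal (by positivity) hr).const_mul _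


/-- crossing comparison for the gamma pdfs -/
lemma gamma_pdf_cross {r : ℝ} {i j : ℕ} (hi : 1 ≤ i) (hij : i < j) (hr : 0 < r) {x : ℝ}
    (hx : 0 < x) :
    gammaPDFReal (j:ℝ) r x ≤ gammaPDFReal (i:ℝ) r x ↔
      (r * x) ^ ((j:ℝ) - (i:ℝ)) ≤ Gamma (j:ℝ) / Gamma (i:ℝ) := by
  have hi0 : (0:ℝ) < i := by exact_mod_cast hi
  have hj0 : (0:ℝ) < j := by exact_mod_cast hi.trans hij.le
  have hGi := Gamma_pos_of_pos hi0
  have hGj := Gamma_pos_of_pos hj0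
  set p : ℝ := (j:ℝ) - (i:ℝ) with hp
  have hrj : r ^ (j:ℝ) = r ^ (i:ℝ) * r ^ p := by
    rw [hp, ← Real.rpow_add hr]; ring_nf
  have hxj : x ^ ((j:ℝ) - 1) = x ^ ((i:ℝ) - 1) * x ^ p := by
    rw [hp, ← Real.rpow_add hx]; ring_nf
  have hrx : (r * x) ^ p = r ^ p * x ^ p := Real.mul_rpow hr.le hx.le
  set A : ℝ := r ^ (i:ℝ) * x ^ ((i:ℝ) - 1) with hA
  have hApos : (0:ℝ) < A * exp (-(r * x)) := by
    apply mul_pos (mul_pos (rpow_pos_of_pos hr _) (rpow_pos_of_pos hx _)) (exp_pos _)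
  have e_j : gammaPDFReal (j:ℝ) r x = (A * exp (-(r*x))) * ((r*x) ^ p / Gamma (j:ℝ)) := by
    rw [gammaPDFReal, if_pos hx.le, hrj, hxj, hrx, hA]; ring
  have e_i : gammaPDFReal (i:ℝ) r x = (A * exp (-(r*x))) * (1 / Gamma (i:ℝ)) := by
    rw [gammaPDFReal, if_pos hx.le, hA]; ring
  rw [e_j, e_i, mul_le_mul_iff_right₀ hApos, div_le_div_iff₀ hGj hGi, le_div_iff₀ hGi, one_mul]

/-- reverse crossing comparison for the gamma pdfs -/
lemma gamma_pdf_cross' {r : ℝ} {i j : ℕ} (hi : 1 ≤ i) (hij : i < j) (hr : 0 < r) {x : ℝ}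
    (hx : 0 < x) :
    gammaPDFReal (i:ℝ) r x ≤ gammaPDFReal (j:ℝ) r x ↔
      Gamma (j:ℝ) / Gamma (i:ℝ) ≤ (r * x) ^ ((j:ℝ) - (i:ℝ)) := by
  have hi0 : (0:ℝ) < i := by exact_mod_cast hi
  have hj0 : (0:ℝ) < j := by exact_mod_cast hi.trans hij.le
  have hGi := Gamma_pos_of_pos hi0
  have hGj := Gamma_pos_of_pos hj0
  set p : ℝ := (j:ℝ) - (i:ℝ) with hp
  have hrj : r ^ (j:ℝ) = r ^ (i:ℝ) * r ^ p := by
    rw [hp, ← Real.rpow_add hr]; ring_nf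
  have hxj : x ^ ((j:ℝ) - 1) = x ^ ((i:ℝ) - 1) * x ^ p := by
    rw [hp, ← Real.rpow_add hx]; ring_nf
  have hrx : (r * x) ^ p = r ^ p * x ^ p := Real.mul_rpow hr.le hx.le
  set A : ℝ := r ^ (i:ℝ) * x ^ ((i:ℝ) - 1) with hA
  have hApos : (0:ℝ) < A * exp (-(r * x)) := by
    apply mul_pos (mul_pos (rpow_pos_of_pos hr _) (rpow_pos_of_pos hx _)) (exp_pos _)
  have e_j : gammaPDFReal (j:ℝ) r x = (A * exp (-(r*x))) * ((r*x) ^ p / Gamma (j:ℝ)) := by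
    rw [gammaPDFReal, if_pos hx.le, hrj, hxj, hrx, hA]; ring
  have e_i : gammaPDFReal (i:ℝ) r x = (A * exp (-(r*x))) * (1 / Gamma (i:ℝ)) := by
    rw [gammaPDFReal, if_pos hx.le, hA]; ring
  rw [e_j, e_i, mul_le_mul_iff_right₀ hApos, div_le_div_iff₀ hGi hGj, one_mul, div_le_iff₀ hGi]
/-- Core single-crossing lemma: a monotone integrable function has larger mean
under `Gamma(j, r)` than under `Gamma(i, r)` when `i < j`. -/
lemma gamma_integral_mono {i j : ℕ} (hi : 1 ≤ i) (hij : i < j) {r : ℝ} (hr : 0 < r)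
    {G : ℝ → ℝ} (hG : Monotone G)
    (hGi : Integrable G (gammaMeasure (i:ℝ) r)) (hGj : Integrable G (gammaMeasure (j:ℝ) r)) :
    ∫ x, G x ∂gammaMeasure (i:ℝ) r ≤ ∫ x, G x ∂gammaMeasure (j:ℝ) r := by
  have hi0 : (0:ℝ) < i := by exact_mod_cast hi
  have hj0 : (0:ℝ) < j := by exact_mod_cast hi.trans hij.le
  have hj1 : (1:ℝ) < j := by exact_mod_cast hi.trans_lt hij
  have hGipos := Gamma_pos_of_pos hi0
  have hGjpos := Gamma_pos_of_pos hj0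
  set p : ℝ := (j:ℝ) - (i:ℝ) with hp
  have hp0 : 0 < p := by
    rw [hp]; have : (i:ℝ) < j := by exact_mod_cast hij
    linarith
  set K : ℝ := (Gamma (j:ℝ) / Gamma (i:ℝ)) ^ p⁻¹ with hK
  have hKpos : 0 < K := rpow_pos_of_pos (div_pos hGjpos hGipos) _
  have hKp : K ^ p = Gamma (j:ℝ) / Gamma (i:ℝ) := by
    rw [hK, ← Real.rpow_mul (div_pos hGjpos hGipos).le, inv_mul_cancel₀ hp0.ne', rpow_one]
  set c : ℝ := K / r with hc
  have hcpos : 0 < c := div_pos hKpos hr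
  -- the crossing property
  have cross1 : ∀ x : ℝ, x ≤ c → gammaPDFReal (j:ℝ) r x ≤ gammaPDFReal (i:ℝ) r x := by
    intro x hx
    rcases le_or_gt x 0 with h0 | h0
    · rcases lt_or_eq_of_le h0 with h0 | h0
      · rw [gammaPDFReal, gammaPDFReal, if_neg (not_le.mpr h0), if_neg (not_le.mpr h0)]
      · subst h0
        rw [gammaPDFReal, gammaPDFReal, if_pos le_rfl, if_pos le_rfl]
        have hz : (0:ℝ) ^ ((j:ℝ) - 1) = 0 := Real.zero_rpow (by linarith)
        rw [hz]
        have : (0:ℝ) ^ ((i:ℝ) - 1) ≥ 0 := Real.rpow_nonneg le_rfl _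
        have h1 : (0:ℝ) ≤ r ^ (i:ℝ) / Gamma (i:ℝ) * 0 ^ ((i:ℝ)-1) * exp (-(r * 0)) := by
          positivity
        simpa using h1
    · rw [gamma_pdf_cross hi hij hr h0]
      have hrx : r * x ≤ K := by
        rw [hc, le_div_iff₀ hr] at hx
        linarith [hx]
      calc (r * x) ^ p ≤ K ^ p :=
            Real.rpow_le_rpow (mul_pos hr h0).le hrx hp0.le
      _ = Gamma (j:ℝ) / Gamma (i:ℝ) := hKp
  have cross2 : ∀ x : ℝ, c ≤ x → gammaPDFReal (i:ℝ) r x ≤ gammaPDFReal (j:ℝ) r x := by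
    intro x hx
    have h0 : 0 < x := lt_of_lt_of_le hcpos hx
    rw [gamma_pdf_cross' hi hij hr h0]
    have hrx : K ≤ r * x := by
      rw [hc, div_le_iff₀ hr] at hx
      linarith [hx]
    calc Gamma (j:ℝ) / Gamma (i:ℝ) = K ^ p := hKp.symm
    _ ≤ (r * x) ^ p := Real.rpow_le_rpow hKpos.le hrx hp0.le
  -- probability measures
  have hPi : IsProbabilityMeasure (gammaMeasure (i:ℝ) r) := isProbabilityMeasure_gammaMeasure hi0 hr
  have hPj : IsProbabilityMeasure (gammaMeasure (j:ℝ) r) := isProbabilityMeasure_gammaMeasure hj0 hr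
  have hGi' : Integrable (fun x => (G x - G c) * gammaPDFReal (i:ℝ) r x) volume :=
    (integrable_gamma_iff hi0 hr).mp (hGi.sub (integrable_const _))
  have hGj' : Integrable (fun x => (G x - G c) * gammaPDFReal (j:ℝ) r x) volume :=
    (integrable_gamma_iff hj0 hr).mp (hGj.sub (integrable_const _))
  have key : 0 ≤ ∫ x : ℝ, ((G x - G c) * gammaPDFReal (j:ℝ) r x
      - (G x - G c) * gammaPDFReal (i:ℝ) r x) := by
    apply integral_nonneg
    intro x
    simp only [Pi.zero_apply, ← mul_sub]
    rcases le_total x c with h | h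
    · have h1 := cross1 x h
      have h2 : G x ≤ G c := hG h
      nlinarith
    · have h1 := cross2 x h
      have h2 : G c ≤ G x := hG h
      nlinarith
  rw [integral_sub hGj' hGi'] at key
  have e_i : ∫ x : ℝ, (G x - G c) * gammaPDFReal (i:ℝ) r x
      = (∫ x, G x ∂gammaMeasure (i:ℝ) r) - G c := by
    rw [← integral_gamma_eq _ _ hi0 hr (fun x => G x - G c),
      integral_sub hGi (integrable_const _), integral_const, probReal_univ]
    simp
  have e_j : ∫ x : ℝ, (G x - G c) * gammaPDFReal (j:ℝ) r x
      = (∫ x, G x ∂gammaMeasure (j:ℝ) r) - G c := by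
    rw [← integral_gamma_eq _ _ hj0 hr (fun x => G x - G c),
      integral_sub hGj (integrable_const _), integral_const, probReal_univ]
    simp
  rw [e_i, e_j] at key
  linarith
lemma integrable_phi_shift {φ : ℝ → ℝ} (hconv : ConvexOn ℝ Set.univ φ) (hmono : Monotone φ)
    {n : ℕ} (hn : 1 ≤ n) {r : ℝ} (hr : 0 < r) (x : ℝ) :
    Integrable (fun y => φ (x - y)) (gammaMeasure (n : ℝ) r) := by
  have hn0 : (0:ℝ) < n := by exact_mod_cast hn
  haveI : IsProbabilityMeasure (gammaMeasure (n:ℝ) r) := isProbabilityMeasure_gammaMeasure hn0 hr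
  set m : ℝ := φ 1 - φ 0 with hm
  have hm0 : 0 ≤ m := by
    have := hmono (by norm_num : (0:ℝ) ≤ 1); rw [hm]; linarith
  refine Integrable.mono' (g := fun y => (|φ x| + |φ 0| + m * |x|) + m * y)
    ((integrable_const _).add ((integrable_id_gamma hn hr).const_mul m))
    ((hmono.measurable.comp (measurable_const.sub measurable_id)).aestronglyMeasurable) ?_
  filter_upwards [gamma_ae_nonneg_s10 ((n:ℝ)) r] with y hy
  have h1 : φ (x - y) ≤ φ x := hmono (by linarith)
  have h2 : φ 0 - m * |x - y| ≤ φ (x - y) := convex_lower_bound hconv hmono _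
  have h3 : |x - y| ≤ |x| + y := by
    cases' abs_cases x with h h <;> cases' abs_cases (x - y) with h' h' <;> linarith
  have h4 : m * |x - y| ≤ m * (|x| + y) := mul_le_mul_of_nonneg_left h3 hm0
  have h5 : 0 ≤ m * y := mul_nonneg hm0 hy
  rw [Real.norm_eq_abs, abs_le]
  constructor
  · nlinarith [le_abs_self (φ 0), neg_abs_le (φ 0), abs_nonneg x, abs_nonneg (φ x),
      mul_nonneg hm0 (abs_nonneg x)]
  · nlinarith [le_abs_self (φ x), neg_abs_le (φ 0), abs_nonneg x, abs_nonneg (φ 0),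
      mul_nonneg hm0 (abs_nonneg x)]

/-- Submodularity on the diagonal: for independent Erlang variables
`X_k ~ Erlang(k,λ)`, `Y_l ~ Erlang(l,μ)` and an increasing convex `φ`,
`Φ(i,i) + Φ(j,j) ≤ Φ(i,j) + Φ(j,i)` for `i < j`, where `Φ(k,l) = E[φ(X_k - Y_l)]`. -/
theorem erlang_submodularity
    (lam mu : ℝ) (hlam : 0 < lam) (hmu : 0 < mu)
    (i j : ℕ) (hi : 1 ≤ i) (hij : i < j)
    (φ : ℝ → ℝ) (hconv : ConvexOn ℝ Set.univ φ) (hmono : Monotone φ)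
    (hint : ∀ k ∈ ({i, j} : Finset ℕ), ∀ l ∈ ({i, j} : Finset ℕ),
      Integrable (fun p : ℝ × ℝ => φ (p.1 - p.2))
        ((gammaMeasure (k : ℝ) lam).prod (gammaMeasure (l : ℝ) mu))) :
    (∫ p : ℝ × ℝ, φ (p.1 - p.2) ∂((gammaMeasure (i : ℝ) lam).prod (gammaMeasure (i : ℝ) mu))) +
      (∫ p : ℝ × ℝ, φ (p.1 - p.2) ∂((gammaMeasure (j : ℝ) lam).prod (gammaMeasure (j : ℝ) mu))) ≤
    (∫ p : ℝ × ℝ, φ (p.1 - p.2) ∂((gammaMeasure (i : ℝ) lam).prod (gammaMeasure (j : ℝ) mu))) +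
      ∫ p : ℝ × ℝ, φ (p.1 - p.2) ∂((gammaMeasure (j : ℝ) lam).prod (gammaMeasure (i : ℝ) mu)) := by
  have hj : 1 ≤ j := hi.trans hij.le
  have hi0 : (0:ℝ) < i := by exact_mod_cast hi
  have hj0 : (0:ℝ) < j := by exact_mod_cast hj
  haveI : IsProbabilityMeasure (gammaMeasure (i:ℝ) mu) := isProbabilityMeasure_gammaMeasure hi0 hmu
  haveI : IsProbabilityMeasure (gammaMeasure (j:ℝ) mu) := isProbabilityMeasure_gammaMeasure hj0 hmu
  haveI : IsProbabilityMeasure (gammaMeasure (i:ℝ) lam) := isProbabilityMeasure_gammaMeasure hi0 hlam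
  haveI : IsProbabilityMeasure (gammaMeasure (j:ℝ) lam) := isProbabilityMeasure_gammaMeasure hj0 hlam
  have hii := hint i (by simp) i (by simp)
  have hij2 := hint i (by simp) j (by simp)
  have hji := hint j (by simp) i (by simp)
  have hjj := hint j (by simp) j (by simp)
  set I : ℕ → ℝ → ℝ := fun l x => ∫ y, φ (x - y) ∂gammaMeasure (l:ℝ) mu with hI
  -- monotonicity of g = I i - I j
  have hgmono : Monotone (fun x => I i x - I j x) := by
    intro x x' hxx'
    have hGmono : Monotone (fun y => φ (x - y) - φ (x' - y)) := by
      intro y y' hyy'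
      have hr := convex_rearrange hconv (a := x - y') (b := x - y) (c := x' - y)
        (by linarith) (by linarith)
      have harg : (x - y') + (x' - y) - (x - y) = x' - y' := by ring
      rw [harg] at hr
      simp only
      linarith
    have h1 := gamma_integral_mono hi hij hmu hGmono
      ((integrable_phi_shift hconv hmono hi hmu x).sub (integrable_phi_shift hconv hmono hi hmu x'))
      ((integrable_phi_shift hconv hmono hj hmu x).sub (integrable_phi_shift hconv hmono hj hmu x'))
    rw [integral_sub (integrable_phi_shift hconv hmono hi hmu x)
        (integrable_phi_shift hconv hmono hi hmu x'),
      integral_sub (integrable_phi_shift hconv hmono hj hmu x)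
        (integrable_phi_shift hconv hmono hj hmu x')] at h1
    simp only [hI]
    linarith
  -- integrability of g under the two lam-measures
  have gInt_i : Integrable (fun x => I i x - I j x) (gammaMeasure (i:ℝ) lam) :=
    (hii.integral_prod_left).sub (hij2.integral_prod_left)
  have gInt_j : Integrable (fun x => I i x - I j x) (gammaMeasure (j:ℝ) lam) :=
    (hji.integral_prod_left).sub (hjj.integral_prod_left)
  have hmain := gamma_integral_mono hi hij hlam hgmono gInt_i gInt_j
  rw [integral_sub (hii.integral_prod_left) (hij2.integral_prod_left),
    integral_sub (hji.integral_prod_left) (hjj.integral_prod_left)] at hmain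
  rw [integral_prod _ hii, integral_prod _ hij2, integral_prod _ hji, integral_prod _ hjj]
  simp only [hI] at hmain ⊢
  linarith
end
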